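/- arXiv:math/0311238 — 3 statements merged into one kernel-verified Lean document; each statement's English description precedes it below -/
import Mathlib

section
/- Let f : ℂ \ {0} → ℂ be continuous and constant on each ray emanating from the origin, i.e. f(tz) = f(z) for all z ≠ 0 and all real t > 0. Suppose f extends holomorphically from bΔ(a,1) and from bΔ(b,1), where a, b ∈ ℂ, |a| < 1, |b| < 1, b ≠ a and b ≠ −a. Then there exists a function g from the disc algebra such that f(z) = g(z/|z|) for all z ≠ 0. Consequently f(tz) = f(z) for all z ≠ 0 and all real t ≠ 0, and f extends holomorphically from every circle bΔ(c,ρ) with |c| < ρ. -/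
open Complex Metric ComplexConjugate Filter Topology

noncomputable section

namespace S17

def Complex.abs : AbsoluteValue ℂ ℝ := NormedField.toAbsoluteValue ℂ
lemma Complex.norm_eq_abs (z : ℂ) : ‖z‖ = Complex.abs z := rfl
@[simp] lemma Complex.abs_ofReal (r : ℝ) : Complex.abs r = |r| := by
  show ‖(r : ℂ)‖ = |r|; simp
@[simp] lemma Complex.abs_conj (z : ℂ) : Complex.abs (conj z) = Complex.abs z := by
  show ‖conj z‖ = ‖z‖; simp
@[simp] lemma Complex.sq_abs (z : ℂ) : Complex.abs z ^ 2 = normSq z := Complex.sq_norm z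
lemma Complex.abs_exp (z : ℂ) : Complex.abs (Complex.exp z) = Real.exp z.re := Complex.norm_exp z
lemma Complex.continuous_abs : Continuous Complex.abs := continuous_norm
lemma Complex.normSq_eq_abs (z : ℂ) : normSq z = Complex.abs z ^ 2 := Complex.normSq_eq_norm_sq z

def dd (a z : ℂ) : ℂ := 1 + (conj a) * (z - a)
def Rm (a z : ℂ) : ℂ := z * (z - a) / dd a z
def invo (a z : ℂ) : ℂ := (((normSq a : ℝ) : ℂ) - 1) * (z - a) / dd a z
def Dq (a w : ℂ) : ℂ := (a + conj a * w)^2 + 4*(1 - ((normSq a : ℝ) : ℂ))*w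
def sq0 (x : ℂ) : ℂ := if x = 0 then 0 else Complex.exp (Complex.log x / 2)
def rt1 (a w : ℂ) : ℂ := ((a + conj a * w) + sq0 (Dq a w))/2
def rt2 (a w : ℂ) : ℂ := ((a + conj a * w) - sq0 (Dq a w))/2
def trace (a : ℂ) (M : ℂ → ℂ) (w : ℂ) : ℂ := (M (rt1 a w) + M (rt2 a w))/2
def Pq (a w z : ℂ) : ℂ := z^2 - (a + conj a * w)*z - (1 - ((normSq a : ℝ):ℂ))*w
def qpt (a u : ℂ) : ℂ := (((conj u * a).re + Real.sqrt (1 - ((conj u * a).im)^2) : ℝ) : ℂ) * u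
def tA (a : ℂ) : ℝ := Real.sqrt (1 - normSq a)
def alph (a : ℂ) : ℂ := -(a^2) / (((1 + tA a)^2 : ℝ) : ℂ)
def zfix (a : ℂ) : ℂ := ((tA a/(1 + tA a) : ℝ) : ℂ) * a

lemma mem_cb {c z : ℂ} {r : ℝ} : z ∈ closedBall c r ↔ Complex.abs (z - c) ≤ r := by
  rw [Metric.mem_closedBall, Complex.dist_eq]; rfl

lemma mem_bl {c z : ℂ} {r : ℝ} : z ∈ ball c r ↔ Complex.abs (z - c) < r := by
  rw [Metric.mem_ball, Complex.dist_eq]; rfl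

lemma mem_sp {c z : ℂ} {r : ℝ} : z ∈ sphere c r ↔ Complex.abs (z - c) = r := by
  rw [Metric.mem_sphere, Complex.dist_eq]; rfl

lemma sq0_sq (x : ℂ) : sq0 x ^ 2 = x := by
  unfold sq0
  split_ifs with h
  · simp [h]
  · rw [← Complex.exp_nat_mul]
    rw [show (2 : ℕ) * (Complex.log x / 2) = Complex.log x by ring]
    exact Complex.exp_log h

lemma sq0_ne_zero {x : ℂ} (hx : x ≠ 0) : sq0 x ≠ 0 := by
  intro h
  apply hx
  rw [← sq0_sq x, h]; ring

lemma abs_sq0 (x : ℂ) : Complex.abs (sq0 x) = Real.sqrt (Complex.abs x) := by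
  unfold sq0
  split_ifs with h
  · simp [h]
  · have h1 : Complex.abs (Complex.exp (Complex.log x / 2)) =
      Real.exp (Real.log (Complex.abs x) / 2) := by
      rw [Complex.abs_exp]
      congr 1
      have : (Complex.log x / 2).re = (Complex.log x).re / 2 := by
        simp [Complex.div_re, Complex.normSq]
      rw [this, Complex.log_re]; rfl
    rw [h1]
    have hx0 : 0 < Complex.abs x := Complex.abs.pos h
    have h2 : (Real.exp (Real.log (Complex.abs x) / 2))^2 = Complex.abs x := by
      rw [← Real.exp_nat_mul]
      rw [show ((2:ℕ) : ℝ) * (Real.log (Complex.abs x) / 2) = Real.log (Complex.abs x) by ring]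
      rw [Real.exp_log hx0]
    conv_rhs => rw [← h2]
    rw [Real.sqrt_sq (Real.exp_pos _).le]

lemma normSq_lt_one {a : ℂ} (hA : Complex.abs a < 1) : normSq a < 1 := by
  have := Complex.sq_abs a
  nlinarith [Complex.abs.nonneg a]

lemma dd_ne {a z : ℂ} (hA : Complex.abs a < 1) (hz : Complex.abs (z - a) ≤ 1) :
    dd a z ≠ 0 := by
  intro h
  have h1 : Complex.abs (conj a * (z - a)) ≤ Complex.abs a := by
    rw [map_mul, Complex.abs_conj]
    nlinarith [Complex.abs.nonneg a, Complex.abs.nonneg (z - a)]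
  have h2 : Complex.abs (conj a * (z - a)) = 1 := by
    have : conj a * (z - a) = -1 := by
      have : (1 : ℂ) + conj a * (z - a) = 0 := h
      linear_combination this
    rw [this]; simp
  linarith

/-- Key normSq identity. -/
lemma key_identity (a z : ℂ) :
    ((normSq z : ℝ) : ℂ) - ((normSq (dd a z) : ℝ) : ℂ) =
      (((normSq (z - a) : ℝ) : ℂ) - 1) * (1 - ((normSq a : ℝ) : ℂ)) := by
  rw [← Complex.mul_conj, ← Complex.mul_conj, ← Complex.mul_conj, ← Complex.mul_conj]
  unfold dd
  simp only [map_add, map_mul, map_one, map_sub, Complex.conj_conj]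
  ring

lemma key_identity_real (a z : ℂ) :
    normSq z - normSq (dd a z) = (normSq (z - a) - 1) * (1 - normSq a) := by
  have := key_identity a z
  exact_mod_cast this

lemma abs_z_le_abs_dd {a z : ℂ} (hA : Complex.abs a < 1) (hz : Complex.abs (z - a) ≤ 1) :
    Complex.abs z ≤ Complex.abs (dd a z) := by
  have h := key_identity_real a z
  have h1 : normSq (z - a) ≤ 1 := by
    have := Complex.sq_abs (z - a); nlinarith [Complex.abs.nonneg (z-a)]
  have h2 : normSq a < 1 := normSq_lt_one hA
  have h3 : normSq z ≤ normSq (dd a z) := by nlinarith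
  have := Complex.sq_abs z
  have := Complex.sq_abs (dd a z)
  nlinarith [Complex.abs.nonneg z, Complex.abs.nonneg (dd a z)]

lemma abs_Rm_le {a z : ℂ} (hA : Complex.abs a < 1) (hz : Complex.abs (z - a) ≤ 1) :
    Complex.abs (Rm a z) ≤ 1 := by
  have hd := dd_ne hA hz
  have h1 := abs_z_le_abs_dd hA hz
  have hdpos : 0 < Complex.abs (dd a z) := Complex.abs.pos hd
  unfold Rm
  rw [map_div₀, map_mul]
  rw [div_le_one hdpos]
  nlinarith [Complex.abs.nonneg z, Complex.abs.nonneg (z - a)]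

lemma abs_z_lt_abs_dd {a z : ℂ} (hA : Complex.abs a < 1) (hz : Complex.abs (z - a) < 1) :
    Complex.abs z < Complex.abs (dd a z) := by
  have h := key_identity_real a z
  have h1 : normSq (z - a) < 1 := by
    have := Complex.sq_abs (z - a); nlinarith [Complex.abs.nonneg (z-a)]
  have h2 : normSq a < 1 := normSq_lt_one hA
  have h3 : normSq z < normSq (dd a z) := by nlinarith
  have := Complex.sq_abs z
  have := Complex.sq_abs (dd a z)
  nlinarith [Complex.abs.nonneg z, Complex.abs.nonneg (dd a z)]

lemma abs_Rm_lt {a z : ℂ} (hA : Complex.abs a < 1) (hz : Complex.abs (z - a) < 1) :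
    Complex.abs (Rm a z) < 1 := by
  have hd := dd_ne hA hz.le
  have h1 := abs_z_lt_abs_dd hA hz
  have hdpos : 0 < Complex.abs (dd a z) := Complex.abs.pos hd
  unfold Rm
  rw [map_div₀, map_mul, div_lt_one hdpos]
  nlinarith [Complex.abs.nonneg z, Complex.abs.nonneg (z - a)]

lemma abs_Rm_eq {a z : ℂ} (hA : Complex.abs a < 1) (hz : Complex.abs (z - a) = 1) :
    Complex.abs (Rm a z) = 1 := by
  have hd := dd_ne hA hz.le
  have h := key_identity_real a z
  have h1 : normSq (z - a) = 1 := by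
    have := Complex.sq_abs (z - a); nlinarith
  have h3 : normSq z = normSq (dd a z) := by
    rw [h1] at h
    have h4 : normSq z - normSq (dd a z) = 0 := by rw [h]; ring
    linarith
  have habs : Complex.abs z = Complex.abs (dd a z) := by
    have := Complex.sq_abs z
    have := Complex.sq_abs (dd a z)
    nlinarith [Complex.abs.nonneg z, Complex.abs.nonneg (dd a z)]
  have hdpos : 0 < Complex.abs (dd a z) := Complex.abs.pos hd
  unfold Rm
  rw [map_div₀, map_mul, habs, hz]
  field_simp

lemma Pq_eq_prod (a w z : ℂ) : Pq a w z = z*(z-a) - w * dd a z := by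
  unfold Pq dd
  rw [Complex.normSq_eq_conj_mul_self]
  ring

lemma Pq_eq_factor (a w z : ℂ) : Pq a w z = (z - rt1 a w) * (z - rt2 a w) := by
  have h := sq0_sq (Dq a w)
  unfold Pq rt1 rt2 Dq at *
  linear_combination (1/4 : ℂ) * h

lemma root_dd_ne {a w z : ℂ} (hA : Complex.abs a < 1) (hroot : Pq a w z = 0) :
    dd a z ≠ 0 := by
  intro hd
  rw [Pq_eq_prod, hd, mul_zero, sub_zero, mul_eq_zero] at hroot
  have h2 : normSq a < 1 := normSq_lt_one hA
  rcases hroot with h | h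
  · subst h
    have he : dd a 0 = 1 - ((normSq a : ℝ) : ℂ) := by
      unfold dd
      rw [Complex.normSq_eq_conj_mul_self]
      ring
    rw [he] at hd
    have h5 : ((normSq a : ℝ) : ℂ) = 1 := by linear_combination -hd
    have h6 : (normSq a : ℝ) = 1 := by exact_mod_cast h5
    linarith
  · have hz : z = a := by linear_combination h
    rw [hz] at hd
    have he : dd a a = 1 := by unfold dd; ring
    rw [he] at hd
    exact one_ne_zero hd

lemma root_Rm {a w z : ℂ} (hA : Complex.abs a < 1) (hroot : Pq a w z = 0) :
    Rm a z = w := by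
  have hd := root_dd_ne hA hroot
  rw [Pq_eq_prod] at hroot
  unfold Rm
  field_simp
  linear_combination hroot

lemma root_loc_le {a w z : ℂ} (hA : Complex.abs a < 1) (hroot : Pq a w z = 0)
    (hw : Complex.abs w ≤ 1) : Complex.abs (z - a) ≤ 1 := by
  by_contra hgt
  push_neg at hgt
  have hR := root_Rm hA hroot
  have hd := root_dd_ne hA hroot
  -- |z - a| > 1 implies |Rm a z| > 1
  have h := key_identity_real a z
  have h1 : 1 < normSq (z - a) := by
    have := Complex.sq_abs (z - a); nlinarith [Complex.abs.nonneg (z-a)]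
  have h2 : normSq a < 1 := normSq_lt_one hA
  have h3 : normSq (dd a z) < normSq z := by nlinarith
  have habs : Complex.abs (dd a z) < Complex.abs z := by
    have := Complex.sq_abs z
    have := Complex.sq_abs (dd a z)
    nlinarith [Complex.abs.nonneg z, Complex.abs.nonneg (dd a z)]
  have hdpos : 0 < Complex.abs (dd a z) := Complex.abs.pos hd
  have : 1 < Complex.abs (Rm a z) := by
    unfold Rm
    rw [map_div₀, map_mul, lt_div_iff₀ hdpos]
    nlinarith
  rw [hR] at this
  linarith

lemma root_loc_lt {a w z : ℂ} (hA : Complex.abs a < 1) (hroot : Pq a w z = 0)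
    (hw : Complex.abs w < 1) : Complex.abs (z - a) < 1 := by
  rcases lt_or_eq_of_le (root_loc_le hA hroot hw.le) with h | h
  · exact h
  · exfalso
    have := abs_Rm_eq hA h
    rw [root_Rm hA hroot] at this
    linarith

lemma root_loc_eq {a w z : ℂ} (hA : Complex.abs a < 1) (hroot : Pq a w z = 0)
    (hw : Complex.abs w = 1) : Complex.abs (z - a) = 1 := by
  rcases lt_or_eq_of_le (root_loc_le hA hroot hw.le) with h | h
  · exfalso
    have := abs_Rm_lt hA h
    rw [root_Rm hA hroot] at this
    linarith
  · exact h

lemma rt1_root (a w : ℂ) : Pq a w (rt1 a w) = 0 := by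
  rw [Pq_eq_factor]; ring

lemma rt2_root (a w : ℂ) : Pq a w (rt2 a w) = 0 := by
  rw [Pq_eq_factor]; ring

lemma rt_sum (a w : ℂ) : rt1 a w + rt2 a w = a + conj a * w := by
  unfold rt1 rt2; ring

lemma rt_prod (a w : ℂ) : rt1 a w * rt2 a w = -(1 - ((normSq a : ℝ):ℂ)) * w := by
  have h := sq0_sq (Dq a w)
  unfold rt1 rt2 Dq at *
  linear_combination (-1/4 : ℂ) * h

/-- the pair-matching lemma -/
lemma pair_match {s p r1 r2 q1 q2 : ℂ} (h1 : r1 + r2 = s) (h2 : r1*r2 = p)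
    (h3 : q1 + q2 = s) (h4 : q1*q2 = p) (M : ℂ → ℂ) :
    M r1 + M r2 = M q1 + M q2 := by
  have e : (r1 - q1) * (r1 - q2) = 0 := by
    linear_combination r1*h1 - r1*h3 - h2 + h4
  rcases mul_eq_zero.mp e with h | h
  · have hr1 : r1 = q1 := by linear_combination h
    have hr2 : r2 = q2 := by
      have := h1; rw [hr1] at this; linear_combination this - h3
    rw [hr1, hr2]
  · have hr1 : r1 = q2 := by linear_combination h
    have hr2 : r2 = q1 := by
      have := h1; rw [hr1] at this; linear_combination this - h3
    rw [hr1, hr2]; ring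

lemma trace_spec {a w q1 q2 : ℂ} (h3 : q1 + q2 = a + conj a * w)
    (h4 : q1 * q2 = -(1 - ((normSq a : ℝ):ℂ)) * w) (M : ℂ → ℂ) :
    trace a M w = (M q1 + M q2)/2 := by
  unfold trace
  rw [pair_match (rt_sum a w) (rt_prod a w) h3 h4 M]

-- invo lemmas
lemma invo_add {a z : ℂ} (hd : dd a z ≠ 0) :
    z + invo a z = a + conj a * Rm a z := by
  unfold invo Rm dd at *
  rw [Complex.normSq_eq_conj_mul_self]
  field_simp
  ring

lemma invo_mul {a z : ℂ} (hd : dd a z ≠ 0) :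
    z * invo a z = -(1 - ((normSq a : ℝ):ℂ)) * Rm a z := by
  unfold invo Rm dd at *
  rw [Complex.normSq_eq_conj_mul_self]
  field_simp
  ring

lemma invo_root {a z : ℂ} (hd : dd a z ≠ 0) :
    Pq a (Rm a z) (invo a z) = 0 := by
  have h1 := invo_add hd
  have h2 := invo_mul hd
  unfold Pq
  linear_combination (invo a z) * h1 - h2 - (invo a z)*(invo a z)*1

lemma self_root {a z : ℂ} (hd : dd a z ≠ 0) : Pq a (Rm a z) z = 0 := by
  rw [Pq_eq_prod]
  unfold Rm
  field_simp
  ring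

lemma trace_compose {a z : ℂ} (hd : dd a z ≠ 0) (M : ℂ → ℂ) :
    trace a M (Rm a z) = (M z + M (invo a z))/2 := by
  exact trace_spec (by linear_combination invo_add hd) (invo_mul hd) M

-- invo membership etc.
lemma invo_mem_cb {a z : ℂ} (hA : Complex.abs a < 1) (hz : Complex.abs (z - a) ≤ 1) :
    Complex.abs (invo a z - a) ≤ 1 :=
  root_loc_le hA (invo_root (dd_ne hA hz)) (abs_Rm_le hA hz)

lemma invo_mem_bl {a z : ℂ} (hA : Complex.abs a < 1) (hz : Complex.abs (z - a) < 1) :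
    Complex.abs (invo a z - a) < 1 :=
  root_loc_lt hA (invo_root (dd_ne hA hz.le)) (abs_Rm_lt hA hz)

lemma invo_mem_sp {a z : ℂ} (hA : Complex.abs a < 1) (hz : Complex.abs (z - a) = 1) :
    Complex.abs (invo a z - a) = 1 :=
  root_loc_eq hA (invo_root (dd_ne hA hz.le)) (abs_Rm_eq hA hz)

lemma Rm_invo {a z : ℂ} (hA : Complex.abs a < 1) (hz : Complex.abs (z - a) ≤ 1) :
    Rm a (invo a z) = Rm a z :=
  root_Rm hA (invo_root (dd_ne hA hz))

lemma invo_invo {a z : ℂ} (hA : Complex.abs a < 1) (hz : Complex.abs (z - a) ≤ 1) :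
    invo a (invo a z) = z := by
  have hd := dd_ne hA hz
  have hd2 := dd_ne hA (invo_mem_cb hA hz)
  have h1 := invo_add hd
  have h2 := invo_add hd2
  rw [Rm_invo hA hz] at h2
  linear_combination h2 - h1

lemma invo_sub {a z z₀ : ℂ} (hd : dd a z ≠ 0) (hd0 : dd a z₀ ≠ 0) :
    invo a z - invo a z₀ = (((normSq a : ℝ):ℂ) - 1) * (z - z₀) / (dd a z * dd a z₀) := by
  unfold invo dd at *
  rw [div_sub_div _ _ hd hd0]
  ring

lemma sphere_conj {z c : ℂ} {r : ℝ} (hz : Complex.abs (z - c) = r) :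
    (z - c) * conj (z - c) = ((r^2 : ℝ) : ℂ) := by
  rw [Complex.mul_conj]
  norm_cast
  rw [← Complex.sq_abs, hz]

lemma dd_sphere {a z : ℂ} (hz : Complex.abs (z - a) = 1) :
    dd a z = (z - a) * conj z := by
  have hc := sphere_conj hz
  rw [map_sub] at hc
  norm_num at hc
  unfold dd
  linear_combination -hc

lemma invo_sphere {a z : ℂ} (hA : Complex.abs a < 1) (hz : Complex.abs (z - a) = 1) :
    invo a z = (((normSq a - 1)/ normSq z : ℝ) : ℂ) * z := by
  have hd := dd_ne hA hz.le
  have hz0 : z ≠ 0 := by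
    intro h
    rw [h] at hz
    simp at hz
    linarith
  have hza : z - a ≠ 0 := by
    intro h
    rw [h] at hz
    simpa using hz
  have hzc : z * conj z = ((normSq z : ℝ) : ℂ) := Complex.mul_conj z
  have hnz : (normSq z : ℝ) ≠ 0 := by
    simpa [Complex.normSq_eq_zero] using hz0
  have hcz : conj z ≠ 0 := by
    intro h
    apply hz0
    simpa using congrArg conj h
  have hnzC : ((normSq z : ℝ):ℂ) ≠ 0 := by exact_mod_cast hnz
  rw [show invo a z = (((normSq a :ℝ):ℂ) - 1) * (z - a) / dd a z from rfl, dd_sphere hz]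
  push_cast
  field_simp
  linear_combination -(((normSq a:ℝ):ℂ) - 1) * hzc

-- qpt lemmas
lemma qpt_sum {a u : ℂ} (hu : Complex.abs u = 1) :
    qpt a u + qpt a (-u) = a + conj a * u^2 := by
  have huc : u * conj u = 1 := by
    have := sphere_conj (c := 0) (r := 1) (by simpa using hu)
    simpa using this
  have hre : ((conj (-u)) * a).re = -((conj u * a).re) := by
    rw [map_neg, neg_mul, Complex.neg_re]
  have him : (1 - (((conj (-u)) * a).im)^2) = 1 - (((conj u * a)).im)^2 := by
    rw [map_neg, neg_mul, Complex.neg_im]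
    ring
  have hx : conj u * a + u * conj a = ((2 * (conj u * a).re : ℝ) : ℂ) := by
    rw [show u * conj a = conj (conj u * a) by rw [map_mul, Complex.conj_conj]]
    rw [Complex.add_conj]
  push_cast at hx
  unfold qpt
  rw [hre, him]
  push_cast
  linear_combination (-u) * hx + a * huc

lemma qpt_prod {a u : ℂ} (hA : Complex.abs a < 1) (hu : Complex.abs u = 1) :
    qpt a u * qpt a (-u) = -(1 - ((normSq a : ℝ):ℂ)) * u^2 := by
  have hre : ((conj (-u)) * a).re = -((conj u * a).re) := by
    rw [map_neg, neg_mul, Complex.neg_re]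
  have him : (1 - (((conj (-u)) * a).im)^2) = 1 - (((conj u * a)).im)^2 := by
    rw [map_neg, neg_mul, Complex.neg_im]
    ring
  have hns : normSq (conj u * a) = normSq a := by
    rw [Complex.normSq_mul, Complex.normSq_conj]
    rw [Complex.normSq_eq_abs, hu]
    norm_num
  have him_le : ((conj u * a).im)^2 ≤ normSq a := by
    rw [← hns]
    rw [Complex.normSq_apply]
    nlinarith [sq_nonneg ((conj u * a).re)]
  have hA2 : normSq a < 1 := normSq_lt_one hA
  have hsq : Real.sqrt (1 - ((conj u * a).im)^2) ^ 2 = 1 - ((conj u * a).im)^2 :=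
    Real.sq_sqrt (by nlinarith)
  have hrr : ((conj u * a).re + Real.sqrt (1 - ((conj u * a).im)^2)) *
      (-((conj u * a).re) + Real.sqrt (1 - ((conj u * a).im)^2)) = 1 - normSq a := by
    have hre2 : ((conj u * a).re)^2 + ((conj u * a).im)^2 = normSq a := by
      rw [← hns, Complex.normSq_apply]; ring
    nlinarith [hsq]
  unfold qpt
  rw [hre, him]
  have : ((((conj u * a).re + Real.sqrt (1 - ((conj u * a).im)^2) : ℝ)) : ℂ) *
      ((((-((conj u * a).re) + Real.sqrt (1 - ((conj u * a).im)^2) : ℝ))) : ℂ) =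
      ((1 - normSq a : ℝ) : ℂ) := by
    rw [← Complex.ofReal_mul, hrr]
  push_cast at this ⊢
  linear_combination (-(u^2)) * this

lemma qpt_root {a u : ℂ} (hA : Complex.abs a < 1) (hu : Complex.abs u = 1) :
    Pq a (u^2) (qpt a u) = 0 := by
  have h1 := qpt_sum (a := a) hu
  have h2 := qpt_prod hA hu
  unfold Pq
  linear_combination (qpt a u) * h1 - h2

lemma qpt_sphere {a u : ℂ} (hA : Complex.abs a < 1) (hu : Complex.abs u = 1) :
    Complex.abs (qpt a u - a) = 1 := by
  apply root_loc_eq hA (qpt_root hA hu)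
  rw [map_pow, hu]; norm_num

lemma qpt_coef_pos {a u : ℂ} (hA : Complex.abs a < 1) (hu : Complex.abs u = 1) :
    0 < (conj u * a).re + Real.sqrt (1 - ((conj u * a).im)^2) := by
  have hns : normSq (conj u * a) = normSq a := by
    rw [Complex.normSq_mul, Complex.normSq_conj, Complex.normSq_eq_abs, hu]
    norm_num
  have hre2 : ((conj u * a).re)^2 + ((conj u * a).im)^2 = normSq a := by
    rw [← hns, Complex.normSq_apply]; ring
  have hA2 : normSq a < 1 := normSq_lt_one hA
  have hsq : Real.sqrt (1 - ((conj u * a).im)^2) ^ 2 = 1 - ((conj u * a).im)^2 :=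
    Real.sq_sqrt (by nlinarith)
  have hs0 : 0 ≤ Real.sqrt (1 - ((conj u * a).im)^2) := Real.sqrt_nonneg _
  nlinarith [hsq, hs0]

lemma qpt_unit {a u : ℂ} (hA : Complex.abs a < 1) (hu : Complex.abs u = 1) :
    qpt a u / ((Complex.abs (qpt a u) : ℝ) : ℂ) = u := by
  have hpos := qpt_coef_pos hA hu
  have habs : Complex.abs (qpt a u) =
      (conj u * a).re + Real.sqrt (1 - ((conj u * a).im)^2) := by
    unfold qpt
    rw [map_mul, hu, mul_one, Complex.abs_ofReal, abs_of_pos hpos]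
  set r := ((conj u * a).re + Real.sqrt (1 - ((conj u * a).im)^2)) with hr
  have hne : ((r:ℝ):ℂ) ≠ 0 := by exact_mod_cast ne_of_gt hpos
  rw [habs]
  show ((r : ℝ) : ℂ) * u / ((r:ℝ):ℂ) = u
  rw [mul_comm, mul_div_assoc, div_self hne, mul_one]

lemma trace_sphere {a u : ℂ} (hA : Complex.abs a < 1) (hu : Complex.abs u = 1) (M : ℂ → ℂ) :
    trace a M (u^2) = (M (qpt a u) + M (qpt a (-u)))/2 :=
  trace_spec (qpt_sum (a := a) hu) (qpt_prod hA hu) M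

-- tA / alph / zfix
lemma tA_pos {a : ℂ} (hA : Complex.abs a < 1) : 0 < tA a :=
  Real.sqrt_pos.mpr (by linarith [normSq_lt_one hA])

lemma tA_sq {a : ℂ} (hA : Complex.abs a < 1) : tA a ^ 2 = 1 - normSq a :=
  Real.sq_sqrt (by linarith [normSq_lt_one hA])

lemma one_plus_tA_pos {a : ℂ} : 0 < 1 + tA a := by
  have := Real.sqrt_nonneg (1 - normSq a)
  unfold tA; linarith

lemma tA_lt_one {a : ℂ} (hA : Complex.abs a < 1) (hb : a ≠ 0) : tA a < 1 := by
  have h1 : 0 < normSq a := Complex.normSq_pos.mpr hb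
  have h2 : tA a ^ 2 < 1 := by rw [tA_sq hA]; linarith
  nlinarith [Real.sqrt_nonneg (1 - normSq a), tA_pos hA]

lemma tA_sqC {a : ℂ} (hA : Complex.abs a < 1) :
    ((tA a : ℝ) : ℂ)^2 = 1 - ((normSq a : ℝ) : ℂ) := by
  rw [← Complex.ofReal_pow, tA_sq hA]
  push_cast
  ring

lemma hconj (a : ℂ) : conj a * a = ((normSq a : ℝ) : ℂ) := by
  rw [Complex.normSq_eq_conj_mul_self]

lemma hconjT {a : ℂ} (hA : Complex.abs a < 1) :
    conj a * a = 1 - ((tA a : ℝ) : ℂ)^2 := by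
  rw [hconj a]
  linear_combination tA_sqC hA

lemma oneT_ne {a : ℂ} : (1 : ℂ) + ((tA a : ℝ):ℂ) ≠ 0 := by
  have := one_plus_tA_pos (a := a)
  intro h
  have h2 : ((1 + tA a : ℝ) : ℂ) = 0 := by push_cast; linear_combination h
  have : (1 + tA a : ℝ) = 0 := by exact_mod_cast h2
  linarith

lemma alph_eq (a : ℂ) : alph a = -(a^2)/((1 + ((tA a:ℝ):ℂ))^2) := by
  unfold alph
  push_cast
  ring_nf

lemma zfix_eq (a : ℂ) : zfix a = (((tA a:ℝ):ℂ)/(1 + ((tA a:ℝ):ℂ))) * a := by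
  unfold zfix
  push_cast
  ring_nf

lemma alph_sum {a : ℂ} (hA : Complex.abs a < 1) :
    a + conj a * alph a = 2 * zfix a := by
  have hc := hconjT hA
  have hne := oneT_ne (a := a)
  rw [alph_eq, zfix_eq]
  set T : ℂ := ((tA a : ℝ) : ℂ)
  field_simp
  linear_combination (-a) * hc

lemma alph_prod {a : ℂ} (hA : Complex.abs a < 1) :
    -(1 - ((normSq a : ℝ):ℂ)) * alph a = zfix a ^ 2 := by
  have hts := tA_sqC hA
  have hne := oneT_ne (a := a)
  rw [alph_eq, zfix_eq]
  set T : ℂ := ((tA a : ℝ) : ℂ)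
  rw [show (1 : ℂ) - ((normSq a : ℝ):ℂ) = T^2 by linear_combination -hts]
  field_simp

lemma Pq_alph {a : ℂ} (hA : Complex.abs a < 1) (z : ℂ) :
    Pq a (alph a) z = (z - zfix a)^2 := by
  have h1 := alph_sum hA
  have h2 := alph_prod hA
  unfold Pq
  linear_combination (-z) * h1 + h2

lemma Dq_alph {a : ℂ} (hA : Complex.abs a < 1) : Dq a (alph a) = 0 := by
  have h1 := alph_sum hA
  have h2 := alph_prod hA
  unfold Dq
  linear_combination (a + conj a * alph a + 2*zfix a) * h1 - 4 * h2

lemma alph_abs {a : ℂ} (hA : Complex.abs a < 1) :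
    Complex.abs (alph a) = (1 - tA a)/(1 + tA a) := by
  have hts := tA_sq hA
  have hpos := one_plus_tA_pos (a := a)
  unfold alph
  rw [map_div₀, map_neg_eq_map, map_pow, Complex.abs_ofReal]
  rw [Complex.sq_abs, abs_of_pos (by positivity)]
  rw [show normSq a = (1 - tA a)*(1 + tA a) by nlinarith]
  field_simp

lemma alph_lt_one {a : ℂ} (hA : Complex.abs a < 1) : Complex.abs (alph a) < 1 := by
  rw [alph_abs hA]
  have h1 := tA_pos hA
  have h2 := one_plus_tA_pos (a := a)
  rw [div_lt_one h2]
  linarith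

lemma zfix_in_ball {a : ℂ} (hA : Complex.abs a < 1) :
    Complex.abs (zfix a - a) < 1 := by
  have h1 := tA_pos hA
  have h2 := one_plus_tA_pos (a := a)
  unfold zfix
  rw [show ((tA a/(1+tA a) : ℝ) : ℂ) * a - a = ((tA a/(1+tA a) - 1 : ℝ) : ℂ) * a by
    push_cast; ring]
  rw [map_mul, Complex.abs_ofReal]
  have h3 : |tA a/(1+tA a) - 1| = 1/(1 + tA a) := by
    rw [abs_of_neg]
    · field_simp; ring
    · rw [div_sub_one (by linarith)]
      apply div_neg_of_neg_of_pos _ h2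
      linarith
  rw [h3]
  calc 1/(1 + tA a) * Complex.abs a ≤ 1 * Complex.abs a := by
        apply mul_le_mul_of_nonneg_right _ (Complex.abs.nonneg a)
        rw [div_le_one h2]; linarith
  _ < 1 := by linarith

lemma Rm_zfix {a : ℂ} (hA : Complex.abs a < 1) : Rm a (zfix a) = alph a := by
  apply root_Rm hA
  rw [Pq_alph hA]
  ring

lemma dd_zfix {a : ℂ} (hA : Complex.abs a < 1) : dd a (zfix a) = ((tA a : ℝ) : ℂ) := by
  have hc := hconjT hA
  have hne := oneT_ne (a := a)
  unfold dd
  rw [zfix_eq]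
  set T : ℂ := ((tA a : ℝ) : ℂ)
  field_simp
  linear_combination -hc

lemma tA_ne_zeroC {a : ℂ} (hA : Complex.abs a < 1) : ((tA a : ℝ) : ℂ) ≠ 0 := by
  have := tA_pos hA
  intro h
  have : (tA a : ℝ) = 0 := by exact_mod_cast h
  linarith

lemma dd_zfix_ne {a : ℂ} (hA : Complex.abs a < 1) : dd a (zfix a) ≠ 0 := by
  rw [dd_zfix hA]
  exact tA_ne_zeroC hA

lemma Rm_sub_alph {a z : ℂ} (hA : Complex.abs a < 1) (hd : dd a z ≠ 0) :
    Rm a z - alph a = (z - zfix a)^2 / dd a z := by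
  have h1 : z*(z-a) - (alph a) * dd a z = (z - zfix a)^2 := by
    rw [← Pq_eq_prod, Pq_alph hA]
  unfold Rm
  field_simp
  linear_combination h1

lemma invo_fix {a : ℂ} (hA : Complex.abs a < 1) : invo a (zfix a) = zfix a := by
  have h1 := invo_add (dd_zfix_ne hA)
  rw [Rm_zfix hA] at h1
  have h2 := alph_sum hA
  linear_combination h1 + h2

lemma alph_inj {a b : ℂ} (hA : Complex.abs a < 1) (hB : Complex.abs b < 1)
    (h : alph a = alph b) : b = a ∨ b = -a := by
  have habs : (1 - tA a)/(1 + tA a) = (1 - tA b)/(1 + tA b) := by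
    rw [← alph_abs hA, ← alph_abs hB, h]
  have hpa := one_plus_tA_pos (a := a)
  have hpb := one_plus_tA_pos (a := b)
  have ht : tA a = tA b := by
    rw [div_eq_div_iff (by linarith) (by linarith)] at habs
    nlinarith
  have hsq : a^2 = b^2 := by
    rw [alph_eq, alph_eq, ht] at h
    have hne := oneT_ne (a := b)
    field_simp at h
    linear_combination -h
  have : (b - a) * (b + a) = 0 := by linear_combination -hsq
  rcases mul_eq_zero.mp this with h | h
  · left; linear_combination h
  · right; linear_combination h

lemma Dq_unique_root {b v : ℂ} (hB : Complex.abs b < 1) (h : Dq b v = 0)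
    (hv : Complex.abs v < 1) : v = alph b := by
  by_cases hb0 : b = 0
  · subst hb0
    have h4 : (4:ℂ) * v = 0 := by
      unfold Dq at h
      simpa using h
    have hv0 : v = 0 := by
      simpa using h4
    rw [hv0]
    unfold alph
    simp
  · by_contra hne
    have hc := hconjT hB
    have htlt := tA_lt_one hB hb0
    have htpos := tA_pos hB
    have hcb : conj b ≠ 0 := by
      intro hh
      apply hb0
      simpa using congrArg conj hh
    have hDa := Dq_alph hB
    have hfac : (v - alph b) * ((conj b)^2*(v + alph b) + 4 - 2*((normSq b:ℝ):ℂ)) = 0 := by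
      unfold Dq at h hDa
      linear_combination h - hDa - 2*(v - alph b) * (hconj b)
    have hq : (conj b)^2*(v + alph b) + 4 - 2*((normSq b:ℝ):ℂ) = 0 := by
      rcases mul_eq_zero.mp hfac with h' | h'
      · exact absurd (by linear_combination h') hne
      · exact h'
    set T : ℂ := ((tA b : ℝ) : ℂ) with hT
    have hmne : (1:ℂ) - T ≠ 0 := by
      rw [hT]
      intro hh
      have h2 : ((1 - tA b : ℝ) : ℂ) = 0 := by push_cast; linear_combination hh
      have : (1 - tA b : ℝ) = 0 := by exact_mod_cast h2
      linarith
    have hpne : (1:ℂ) + T ≠ 0 := oneT_ne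
    set v' : ℂ := -(b^2) / ((1 - T)^2) with hv'
    have hnq : ((normSq b:ℝ):ℂ) = 1 - T^2 := by
      rw [← hconj b]; exact hc
    have hq' : (conj b)^2*(v' + alph b) + 4 - 2*((normSq b:ℝ):ℂ) = 0 := by
      rw [hv', alph_eq, hnq]
      have e1 : (1 - T)^2 * ((1 - T)^2)⁻¹ = 1 := mul_inv_cancel₀ (pow_ne_zero 2 hmne)
      have e2 : (1 + T)^2 * ((1 + T)^2)⁻¹ = 1 := mul_inv_cancel₀ (pow_ne_zero 2 hpne)
      simp only [div_eq_mul_inv]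
      linear_combination (-(((1 - T)^2)⁻¹ + ((1 + T)^2)⁻¹)*(conj b*b + 1 - T^2)) * hc - (1+T)^2 * e1 - (1-T)^2 * e2
    have hvv : v = v' := by
      have hsub : (conj b)^2 * (v - v') = 0 := by linear_combination hq - hq'
      rcases mul_eq_zero.mp hsub with h' | h'
      · exact absurd h' (pow_ne_zero 2 hcb)
      · linear_combination h'
    have habs' : Complex.abs v' = (1 + tA b)/(1 - tA b) := by
      rw [hv', show (1:ℂ) - T = ((1 - tA b : ℝ) : ℂ) by rw [hT]; push_cast; ring]
      rw [map_div₀, map_neg_eq_map, map_pow, map_pow, Complex.abs_ofReal, Complex.sq_abs]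
      rw [abs_of_pos (by linarith)]
      rw [show normSq b = (1 - tA b)*(1 + tA b) by nlinarith [tA_sq hB]]
      rw [sq]
      exact mul_div_mul_left _ _ (by linarith)
    rw [hvv, habs'] at hv
    rw [div_lt_one (by linarith)] at hv
    linarith

-- continuity helpers
lemma continuous_dd (a : ℂ) : Continuous (dd a) := by unfold dd; fun_prop

lemma continuous_Dq (a : ℂ) : Continuous (Dq a) := by unfold Dq; fun_prop

lemma continuousAt_Rm {a z : ℂ} (hd : dd a z ≠ 0) : ContinuousAt (Rm a) z := by
  unfold Rm
  exact ContinuousAt.div (by fun_prop) (continuous_dd a).continuousAt hd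

lemma differentiableAt_Rm {a z : ℂ} (hd : dd a z ≠ 0) : DifferentiableAt ℂ (Rm a) z := by
  unfold Rm
  apply DifferentiableAt.div (by fun_prop) _ hd
  unfold dd; fun_prop

lemma continuousAt_invo {a z : ℂ} (hd : dd a z ≠ 0) : ContinuousAt (invo a) z := by
  unfold invo
  exact ContinuousAt.div (by fun_prop) (continuous_dd a).continuousAt hd

lemma differentiableAt_invo {a z : ℂ} (hd : dd a z ≠ 0) : DifferentiableAt ℂ (invo a) z := by
  unfold invo
  apply DifferentiableAt.div (by fun_prop) _ hd
  unfold dd; fun_prop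

lemma rt1_mem_cb {a w : ℂ} (hA : Complex.abs a < 1) (hw : Complex.abs w ≤ 1) :
    rt1 a w ∈ closedBall a 1 := mem_cb.mpr (root_loc_le hA (rt1_root a w) hw)

lemma rt2_mem_cb {a w : ℂ} (hA : Complex.abs a < 1) (hw : Complex.abs w ≤ 1) :
    rt2 a w ∈ closedBall a 1 := mem_cb.mpr (root_loc_le hA (rt2_root a w) hw)

lemma rt1_mem_bl {a w : ℂ} (hA : Complex.abs a < 1) (hw : Complex.abs w < 1) :
    rt1 a w ∈ ball a 1 := mem_bl.mpr (root_loc_lt hA (rt1_root a w) hw)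

lemma rt2_mem_bl {a w : ℂ} (hA : Complex.abs a < 1) (hw : Complex.abs w < 1) :
    rt2 a w ∈ ball a 1 := mem_bl.mpr (root_loc_lt hA (rt2_root a w) hw)

lemma abs_mem_cb01 {w : ℂ} (h : w ∈ closedBall (0:ℂ) 1) : Complex.abs w ≤ 1 := by
  have := mem_cb.mp h
  simpa using this

lemma abs_mem_bl01 {w : ℂ} (h : w ∈ ball (0:ℂ) 1) : Complex.abs w < 1 := by
  have := mem_bl.mp h
  simpa using this

lemma sigma_root {a w s : ℂ} (hs : s^2 = Dq a w) :
    Pq a w ((a + conj a * w + s)/2) = 0 := by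
  unfold Pq Dq at *
  linear_combination (1/4 : ℂ) * hs

lemma one_slit : (1 : ℂ) ∈ Complex.slitPlane := by
  rw [Complex.mem_slitPlane_iff]
  left
  norm_num

/-- local square root of `Dq` -/
def sigl (a w₀ w : ℂ) : ℂ := sq0 (Dq a w₀) * Complex.exp (Complex.log (Dq a w / Dq a w₀) / 2)

lemma sigl_at {a w₀ : ℂ} (hD : Dq a w₀ ≠ 0) : sigl a w₀ w₀ = sq0 (Dq a w₀) := by
  unfold sigl
  rw [div_self hD, Complex.log_one]
  norm_num

lemma sigl_contAt {a w₀ : ℂ} (hD : Dq a w₀ ≠ 0) : ContinuousAt (sigl a w₀) w₀ := by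
  unfold sigl
  apply ContinuousAt.mul continuousAt_const
  have h1 : ContinuousAt (fun w => Dq a w / Dq a w₀) w₀ :=
    ((continuous_Dq a).continuousAt).div_const _
  have h2 : (fun w => Dq a w / Dq a w₀) w₀ ∈ Complex.slitPlane := by
    simp only [div_self hD]
    exact one_slit
  exact ((h1.clog h2).div_const _).cexp

lemma sigl_diffAt {a w₀ : ℂ} (hD : Dq a w₀ ≠ 0) : DifferentiableAt ℂ (sigl a w₀) w₀ := by
  unfold sigl
  apply DifferentiableAt.mul (differentiableAt_const _)
  have h1 : DifferentiableAt ℂ (fun w => Dq a w / Dq a w₀) w₀ := by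
    apply DifferentiableAt.div_const
    unfold Dq; fun_prop
  have h2 : (fun w => Dq a w / Dq a w₀) w₀ ∈ Complex.slitPlane := by
    simp only [div_self hD]
    exact one_slit
  exact ((h1.clog h2).div_const _).cexp

lemma sigl_sq {a w₀ : ℂ} (hD : Dq a w₀ ≠ 0) :
    ∀ᶠ w in 𝓝 w₀, (sigl a w₀ w)^2 = Dq a w := by
  filter_upwards [(continuous_Dq a).continuousAt.eventually_ne hD] with w hw
  unfold sigl
  rw [mul_pow, ← Complex.exp_nat_mul]
  rw [show ((2:ℕ):ℂ) * (Complex.log (Dq a w / Dq a w₀) / 2) = Complex.log (Dq a w / Dq a w₀) by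
    push_cast; ring]
  rw [Complex.exp_log (div_ne_zero hw hD), sq0_sq]
  field_simp

/-- On the event where `sigl` squares to `Dq`, the trace equals the symmetric expression. -/
lemma trace_eq_sym {a w₀ : ℂ} (M : ℂ → ℂ) {w : ℂ} (hs : (sigl a w₀ w)^2 = Dq a w)
    (hne : Dq a w ≠ 0) :
    trace a M w = (M ((a + conj a * w + sigl a w₀ w)/2) +
      M ((a + conj a * w - sigl a w₀ w)/2))/2 := by
  have h2 : sq0 (Dq a w)^2 = (sigl a w₀ w)^2 := by rw [sq0_sq, hs]
  have h3 : (sq0 (Dq a w) - sigl a w₀ w) * (sq0 (Dq a w) + sigl a w₀ w) = 0 := by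
    linear_combination h2
  unfold trace rt1 rt2
  rcases mul_eq_zero.mp h3 with h | h
  · have h4 : sq0 (Dq a w) = sigl a w₀ w := by linear_combination h
    rw [h4]
  · have h4 : sq0 (Dq a w) = -(sigl a w₀ w) := by linear_combination h
    rw [h4]
    rw [show a + conj a * w + -(sigl a w₀ w) = a + conj a * w - sigl a w₀ w by ring,
        show a + conj a * w - -(sigl a w₀ w) = a + conj a * w + sigl a w₀ w by ring]
    ring

lemma trace_contOn {a : ℂ} (hA : Complex.abs a < 1) {M : ℂ → ℂ}
    (hM : ContinuousOn M (closedBall a 1)) :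
    ContinuousOn (trace a M) (closedBall 0 1) := by
  intro w₀ hw₀
  have hw₀' : Complex.abs w₀ ≤ 1 := abs_mem_cb01 hw₀
  by_cases hD : Dq a w₀ = 0
  · -- branch point : both roots collapse
    have h00 : sq0 (Dq a w₀) = 0 := by rw [hD]; simp [sq0]
    have hz12 : rt2 a w₀ = rt1 a w₀ := by unfold rt1 rt2; rw [h00]; ring
    have key : ∀ rt : ℂ → ℂ,
        (∀ w, rt w = (a + conj a * w + sq0 (Dq a w))/2 ∨
              rt w = (a + conj a * w - sq0 (Dq a w))/2) →
        Tendsto (fun w => M (rt w)) (𝓝[closedBall 0 1] w₀) (𝓝 (M (rt1 a w₀))) := by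
      intro rt hform
      have htend : Tendsto rt (𝓝[closedBall 0 1] w₀)
          (𝓝[closedBall a 1] (rt1 a w₀)) := by
        rw [tendsto_nhdsWithin_iff]
        constructor
        · apply tendsto_nhdsWithin_of_tendsto_nhds
          rw [tendsto_iff_dist_tendsto_zero]
          have hr1 : rt1 a w₀ = (a + conj a * w₀)/2 := by
            unfold rt1; rw [h00]; ring
          have hbound : ∀ w, dist (rt w) (rt1 a w₀) ≤
              Complex.abs (conj a * (w - w₀))/2 + Real.sqrt (Complex.abs (Dq a w))/2 := by
            intro w
            rw [dist_eq_norm]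
            rcases hform w with h | h
            · rw [h, hr1, show (a + conj a * w + sq0 (Dq a w))/2 - (a + conj a * w₀)/2 =
                  conj a * (w - w₀)/2 + sq0 (Dq a w)/2 by ring]
              calc ‖conj a * (w - w₀)/2 + sq0 (Dq a w)/2‖
                  ≤ ‖conj a * (w - w₀)/2‖ + ‖sq0 (Dq a w)/2‖ := norm_add_le _ _
                _ = Complex.abs (conj a * (w - w₀))/2 + Real.sqrt (Complex.abs (Dq a w))/2 := by
                    simp [Complex.norm_eq_abs, map_div₀, abs_sq0]
            · rw [h, hr1, show (a + conj a * w - sq0 (Dq a w))/2 - (a + conj a * w₀)/2 =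
                  conj a * (w - w₀)/2 - sq0 (Dq a w)/2 by ring]
              calc ‖conj a * (w - w₀)/2 - sq0 (Dq a w)/2‖
                  ≤ ‖conj a * (w - w₀)/2‖ + ‖sq0 (Dq a w)/2‖ := norm_sub_le _ _
                _ = Complex.abs (conj a * (w - w₀))/2 + Real.sqrt (Complex.abs (Dq a w))/2 := by
                    simp [Complex.norm_eq_abs, map_div₀, abs_sq0]
          apply squeeze_zero (fun w => dist_nonneg) hbound
          have t1 : Tendsto (fun w => Complex.abs (conj a * (w - w₀))/2) (𝓝 w₀) (𝓝 0) := by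
            have hc : Continuous (fun w : ℂ => Complex.abs (conj a * (w - w₀))/2) := by
              apply Continuous.div_const
              exact Complex.continuous_abs.comp (by fun_prop)
            have := hc.tendsto w₀
            simpa using this
          have t2 : Tendsto (fun w => Real.sqrt (Complex.abs (Dq a w))/2) (𝓝 w₀) (𝓝 0) := by
            have hc : Continuous (fun w : ℂ => Real.sqrt (Complex.abs (Dq a w))/2) := by
              apply Continuous.div_const
              exact Real.continuous_sqrt.comp (Complex.continuous_abs.comp (continuous_Dq a))
            have := hc.tendsto w₀
            simp only [hD] at this
            simpa using this
          have := t1.add t2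
          simpa using this
        · filter_upwards [self_mem_nhdsWithin] with w hw
          rcases hform w with h | h
          · rw [h]; exact rt1_mem_cb hA (abs_mem_cb01 hw)
          · rw [h]; exact rt2_mem_cb hA (abs_mem_cb01 hw)
      exact (hM (rt1 a w₀) (rt1_mem_cb hA hw₀')).tendsto.comp htend
    have hT1 := key (rt1 a) (fun w => Or.inl rfl)
    have hT2 := key (rt2 a) (fun w => Or.inr rfl)
    unfold ContinuousWithinAt
    have hval : trace a M w₀ = (M (rt1 a w₀) + M (rt1 a w₀))/2 := by
      unfold trace; rw [hz12]
    rw [hval]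
    exact (hT1.add hT2).div_const _
  · -- non-branch point: use the local square root
    have hσc := sigl_contAt hD
    have hσ0 := sigl_at hD
    have hσsq := sigl_sq hD
    have hz1t : Tendsto (fun w => (a + conj a * w + sigl a w₀ w)/2) (𝓝[closedBall 0 1] w₀)
        (𝓝[closedBall a 1] (rt1 a w₀)) := by
      rw [tendsto_nhdsWithin_iff]
      constructor
      · apply tendsto_nhdsWithin_of_tendsto_nhds
        have hca : ContinuousAt (fun w => (a + conj a * w + sigl a w₀ w)/2) w₀ :=
          ContinuousAt.div_const (ContinuousAt.add (by fun_prop) hσc) _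
        have h2 : (a + conj a * w₀ + sigl a w₀ w₀)/2 = rt1 a w₀ := by
          rw [hσ0]; rfl
        rw [← h2]
        exact hca
      · filter_upwards [hσsq.filter_mono nhdsWithin_le_nhds, self_mem_nhdsWithin] with w hsq hw
        exact mem_cb.mpr (root_loc_le hA (sigma_root hsq) (abs_mem_cb01 hw))
    have hz2t : Tendsto (fun w => (a + conj a * w - sigl a w₀ w)/2) (𝓝[closedBall 0 1] w₀)
        (𝓝[closedBall a 1] (rt2 a w₀)) := by
      rw [tendsto_nhdsWithin_iff]
      constructor
      · apply tendsto_nhdsWithin_of_tendsto_nhds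
        have hca : ContinuousAt (fun w => (a + conj a * w - sigl a w₀ w)/2) w₀ :=
          ContinuousAt.div_const (ContinuousAt.sub (by fun_prop) hσc) _
        have h2 : (a + conj a * w₀ - sigl a w₀ w₀)/2 = rt2 a w₀ := by
          rw [hσ0]; rfl
        rw [← h2]
        exact hca
      · filter_upwards [hσsq.filter_mono nhdsWithin_le_nhds, self_mem_nhdsWithin] with w hsq hw
        have hsq' : (-(sigl a w₀ w))^2 = Dq a w := by
          rw [neg_pow]; simpa using hsq
        have h5 := sigma_root hsq'
        rw [show (a + conj a * w + -(sigl a w₀ w))/2 = (a + conj a * w - sigl a w₀ w)/2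
          by ring] at h5
        exact mem_cb.mpr (root_loc_le hA h5 (abs_mem_cb01 hw))
    have hg : Tendsto (fun w => (M ((a + conj a * w + sigl a w₀ w)/2) +
        M ((a + conj a * w - sigl a w₀ w)/2))/2)
        (𝓝[closedBall 0 1] w₀) (𝓝 ((M (rt1 a w₀) + M (rt2 a w₀))/2)) := by
      apply Tendsto.div_const
      exact Tendsto.add
        ((hM _ (rt1_mem_cb hA hw₀')).tendsto.comp hz1t)
        ((hM _ (rt2_mem_cb hA hw₀')).tendsto.comp hz2t)
    unfold ContinuousWithinAt
    have hval : trace a M w₀ = (M (rt1 a w₀) + M (rt2 a w₀))/2 := rfl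
    rw [hval]
    apply hg.congr'
    symm
    filter_upwards [hσsq.filter_mono nhdsWithin_le_nhds,
      ((continuous_Dq a).continuousAt.eventually_ne hD).filter_mono nhdsWithin_le_nhds]
      with w hsq hne
    exact trace_eq_sym M hsq hne

lemma trace_diffAt_nondeg {a : ℂ} (hA : Complex.abs a < 1) {M : ℂ → ℂ}
    (hMd : DifferentiableOn ℂ M (ball a 1)) {w₀ : ℂ} (hw₀ : Complex.abs w₀ < 1)
    (hD : Dq a w₀ ≠ 0) : DifferentiableAt ℂ (trace a M) w₀ := by
  have hσd := sigl_diffAt hD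
  have hσ0 := sigl_at hD
  have hσsq := sigl_sq hD
  have hz1d : DifferentiableAt ℂ (fun w => (a + conj a * w + sigl a w₀ w)/2) w₀ :=
    DifferentiableAt.div_const (DifferentiableAt.add (by fun_prop) hσd) _
  have hz2d : DifferentiableAt ℂ (fun w => (a + conj a * w - sigl a w₀ w)/2) w₀ :=
    DifferentiableAt.div_const (DifferentiableAt.sub (by fun_prop) hσd) _
  have hM1 : DifferentiableAt ℂ M ((a + conj a * w₀ + sigl a w₀ w₀)/2) := by
    rw [hσ0]
    exact hMd.differentiableAt (isOpen_ball.mem_nhds (rt1_mem_bl hA hw₀))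
  have hM2 : DifferentiableAt ℂ M ((a + conj a * w₀ - sigl a w₀ w₀)/2) := by
    rw [hσ0]
    exact hMd.differentiableAt (isOpen_ball.mem_nhds (rt2_mem_bl hA hw₀))
  have hgd : DifferentiableAt ℂ (fun w => (M ((a + conj a * w + sigl a w₀ w)/2) +
      M ((a + conj a * w - sigl a w₀ w)/2))/2) w₀ := by
    apply DifferentiableAt.div_const
    exact DifferentiableAt.add (hM1.comp w₀ hz1d) (hM2.comp w₀ hz2d)
  have heq : (fun w => (M ((a + conj a * w + sigl a w₀ w)/2) +
      M ((a + conj a * w - sigl a w₀ w)/2))/2) =ᶠ[𝓝 w₀] trace a M := by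
    filter_upwards [hσsq, (continuous_Dq a).continuousAt.eventually_ne hD] with w hsq hne
    exact (trace_eq_sym M hsq hne).symm
  exact heq.differentiableAt_iff.mp hgd

lemma Dq_ne_punctured {a w₀ : ℂ} (hD : Dq a w₀ = 0) :
    ∀ᶠ w in 𝓝[≠] w₀, Dq a w ≠ 0 := by
  have hfac : ∀ w, Dq a w = (w - w₀) * ((conj a)^2*(w + w₀) + (4 - 2*((normSq a:ℝ):ℂ))) := by
    intro w
    unfold Dq at hD ⊢
    linear_combination hD + 2*(w - w₀)*(hconj a)
  by_cases hL : (conj a)^2*(w₀ + w₀) + (4 - 2*((normSq a:ℝ):ℂ)) = 0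
  · -- double root case; then conj a ≠ 0 and Dq = conj a ^2 (w - w₀)^2
    have ha : conj a ≠ 0 := by
      intro h0
      rw [h0] at hL
      have hnq : ((normSq a:ℝ):ℂ) = 2 := by linear_combination -hL/2
      have h1 : conj a * a = ((normSq a:ℝ):ℂ) := hconj a
      rw [h0, hnq] at h1
      simp at h1
    have hfac2 : ∀ w, Dq a w = (conj a)^2 * (w - w₀)^2 := by
      intro w
      rw [hfac w]
      linear_combination (w - w₀) * hL
    filter_upwards [self_mem_nhdsWithin] with w hw
    rw [hfac2 w]
    apply mul_ne_zero (pow_ne_zero 2 ha)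
    apply pow_ne_zero
    intro h0
    apply hw
    rw [sub_eq_zero] at h0
    simpa using h0
  · have hLcont : ContinuousAt (fun w => (conj a)^2*(w + w₀) + (4 - 2*((normSq a:ℝ):ℂ))) w₀ := by
      fun_prop
    have hev := hLcont.eventually_ne hL
    rw [eventually_nhdsWithin_iff]
    filter_upwards [hev] with w hw hw'
    rw [hfac w]
    apply mul_ne_zero _ hw
    intro h0
    apply hw'
    rw [sub_eq_zero] at h0
    simpa using h0

lemma trace_diffOn {a : ℂ} (hA : Complex.abs a < 1) {M : ℂ → ℂ}
    (hMc : ContinuousOn M (closedBall a 1)) (hMd : DifferentiableOn ℂ M (ball a 1)) :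
    DifferentiableOn ℂ (trace a M) (ball 0 1) := by
  intro w₀ hw₀
  have hw₀' : Complex.abs w₀ < 1 := abs_mem_bl01 hw₀
  by_cases hD : Dq a w₀ = 0
  · -- removable singularity
    have hda : ∀ᶠ z in 𝓝[≠] w₀, DifferentiableAt ℂ (trace a M) z := by
      have hball : ∀ᶠ z in 𝓝[≠] w₀, z ∈ ball (0:ℂ) 1 :=
        eventually_nhdsWithin_of_eventually_nhds (isOpen_ball.eventually_mem hw₀)
      filter_upwards [hball, Dq_ne_punctured hD] with z hz hz'
      exact trace_diffAt_nondeg hA hMd (abs_mem_bl01 hz) hz'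
    have hct : ContinuousAt (trace a M) w₀ := by
      have h1 := trace_contOn hA hMc w₀ (ball_subset_closedBall hw₀)
      exact h1.continuousAt (Filter.mem_of_superset (isOpen_ball.mem_nhds hw₀)
        ball_subset_closedBall)
    exact (Complex.analyticAt_of_differentiable_on_punctured_nhds_of_continuousAt
      hda hct).differentiableAt.differentiableWithinAt
  · exact (trace_diffAt_nondeg hA hMd hw₀' hD).differentiableWithinAt

-- the odd/even parts of an extension under the involution
def Hf (a : ℂ) (G : ℂ → ℂ) (z : ℂ) : ℂ := (G z - G (invo a z))/2

lemma continuousOn_invo {a : ℂ} (hA : Complex.abs a < 1) :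
    ContinuousOn (invo a) (closedBall a 1) :=
  fun z hz => (continuousAt_invo (dd_ne hA (mem_cb.mp hz))).continuousWithinAt

lemma Hf_contOn {a : ℂ} (hA : Complex.abs a < 1) {G : ℂ → ℂ}
    (hGc : ContinuousOn G (closedBall a 1)) : ContinuousOn (Hf a G) (closedBall a 1) := by
  unfold Hf
  apply ContinuousOn.div_const
  apply ContinuousOn.sub hGc
  apply ContinuousOn.comp hGc (continuousOn_invo hA)
  intro z hz
  exact mem_cb.mpr (invo_mem_cb hA (mem_cb.mp hz))

lemma Hf_diffOn {a : ℂ} (hA : Complex.abs a < 1) {G : ℂ → ℂ}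
    (hGd : DifferentiableOn ℂ G (ball a 1)) : DifferentiableOn ℂ (Hf a G) (ball a 1) := by
  unfold Hf
  apply DifferentiableOn.div_const
  apply DifferentiableOn.sub hGd
  apply DifferentiableOn.comp hGd
  · exact fun z hz => (differentiableAt_invo (dd_ne hA (mem_bl.mp hz).le)).differentiableWithinAt
  · intro z hz
    exact mem_bl.mpr (invo_mem_bl hA (mem_bl.mp hz))

lemma Hf_odd {a : ℂ} (hA : Complex.abs a < 1) {G : ℂ → ℂ} {z : ℂ}
    (hz : Complex.abs (z - a) ≤ 1) : Hf a G (invo a z) = -(Hf a G z) := by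
  unfold Hf
  rw [invo_invo hA hz]
  ring

-- ray invariance helpers
section RayHelpers
variable {f : ℂ → ℂ}

lemma f_ray (hray : ∀ z : ℂ, z ≠ 0 → ∀ t : ℝ, 0 < t → f ((t : ℂ) * z) = f z)
    {z : ℂ} (hz : z ≠ 0) : f z = f (z / ((Complex.abs z : ℝ) : ℂ)) := by
  have habs : Complex.abs z ≠ 0 := Complex.abs.ne_zero hz
  have habsC : ((Complex.abs z : ℝ) : ℂ) ≠ 0 := by exact_mod_cast habs
  have hu : z / ((Complex.abs z : ℝ) : ℂ) ≠ 0 := div_ne_zero hz habsC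
  have := hray _ hu (Complex.abs z) (Complex.abs.pos hz)
  rw [show ((Complex.abs z : ℝ) : ℂ) * (z / ((Complex.abs z : ℝ) : ℂ)) = z by
    field_simp] at this
  exact this

lemma abs_uvec {z : ℂ} (hz : z ≠ 0) : Complex.abs (z / ((Complex.abs z : ℝ) : ℂ)) = 1 := by
  rw [map_div₀, Complex.abs_ofReal, abs_of_pos (Complex.abs.pos hz)]
  rw [div_self (Complex.abs.ne_zero hz)]

lemma f_neg_ray (hray : ∀ z : ℂ, z ≠ 0 → ∀ t : ℝ, 0 < t → f ((t : ℂ) * z) = f z)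
    {z : ℂ} (hz : z ≠ 0) {c : ℝ} (hc : c < 0) :
    f ((c : ℂ) * z) = f (-(z / ((Complex.abs z : ℝ) : ℂ))) := by
  have h1 : ((c:ℂ) * z) = ((-c : ℝ) : ℂ) * (-z) := by push_cast; ring
  have h2 : f ((c:ℂ)*z) = f (-z) := by
    rw [h1]
    exact hray _ (neg_ne_zero.mpr hz) (-c) (by linarith)
  rw [h2, f_ray hray (neg_ne_zero.mpr hz)]
  congr 1
  rw [map_neg_eq_map]
  push_cast
  field_simp

end RayHelpers

lemma sphere_ne_zero {a z : ℂ} (hA : Complex.abs a < 1) (hz : Complex.abs (z - a) = 1) :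
    z ≠ 0 := by
  intro h
  rw [h] at hz
  simp at hz
  linarith

/-- Boundary values of the odd part. -/
lemma Hf_boundary {a : ℂ} (hA : Complex.abs a < 1) {G f : ℂ → ℂ}
    (hGb : ∀ z ∈ sphere a 1, G z = f z)
    (hray : ∀ z : ℂ, z ≠ 0 → ∀ t : ℝ, 0 < t → f ((t : ℂ) * z) = f z)
    {z : ℂ} (hz : Complex.abs (z - a) = 1) :
    Hf a G z = (f (z / ((Complex.abs z : ℝ) : ℂ)) -
      f (-(z / ((Complex.abs z : ℝ) : ℂ))))/2 := by
  have hz0 : z ≠ 0 := sphere_ne_zero hA hz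
  have h1 : G z = f z := hGb z (mem_sp.mpr hz)
  have h2 : G (invo a z) = f (invo a z) := hGb _ (mem_sp.mpr (invo_mem_sp hA hz))
  have h3 : f (invo a z) = f (-(z / ((Complex.abs z : ℝ) : ℂ))) := by
    rw [invo_sphere hA hz]
    apply f_neg_ray hray hz0
    have hn : 0 < normSq z := Complex.normSq_pos.mpr hz0
    have hq : normSq a < 1 := normSq_lt_one hA
    apply div_neg_of_neg_of_pos _ hn
    linarith
  unfold Hf
  rw [h1, h2, h3, f_ray hray hz0]

/-- Max modulus: equality on closed ball from equality on sphere. -/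
lemma eqOn_closedBall_of_eqOn_sphere {F G : ℂ → ℂ}
    (hFc : ContinuousOn F (closedBall 0 1)) (hFd : DifferentiableOn ℂ F (ball 0 1))
    (hGc : ContinuousOn G (closedBall 0 1)) (hGd : DifferentiableOn ℂ G (ball 0 1))
    (hb : ∀ z ∈ sphere (0:ℂ) 1, F z = G z) :
    ∀ z ∈ closedBall (0:ℂ) 1, F z = G z := by
  intro z hz
  have hd : DiffContOnCl ℂ (F - G) (ball 0 1) := by
    constructor
    · exact hFd.sub hGd
    · rw [closure_ball (0:ℂ) one_ne_zero]
      exact hFc.sub hGc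
  have h0 : ∀ w ∈ frontier (ball (0:ℂ) 1), ‖(F - G) w‖ ≤ 0 := by
    rw [frontier_ball (0:ℂ) one_ne_zero]
    intro w hw
    rw [Pi.sub_apply, hb w hw]
    simp
  have h1 := Complex.norm_le_of_forall_mem_frontier_norm_le isBounded_ball hd h0
    (by rwa [closure_ball (0:ℂ) one_ne_zero])
  have h2 : ‖F z - G z‖ = 0 :=
    le_antisymm (by simpa using h1) (norm_nonneg _)
  have h3 := norm_eq_zero.mp h2
  linear_combination h3

/-- factorization of an analytic function that is not locally zero -/
lemma exists_factor {F : ℂ → ℂ} {z₀ : ℂ} (hF : AnalyticAt ℂ F z₀)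
    (hnot : ¬ (∀ᶠ z in 𝓝 z₀, F z = 0)) :
    ∃ (k : ℕ) (g : ℂ → ℂ), AnalyticAt ℂ g z₀ ∧ g z₀ ≠ 0 ∧
      ∀ᶠ z in 𝓝 z₀, F z = (z - z₀)^k * g z := by
  obtain ⟨k, g, hg, hg0, hev⟩ := hF.exists_eventuallyEq_pow_smul_nonzero_iff.mpr hnot
  exact ⟨k, g, hg, hg0, by simpa [smul_eq_mul] using hev⟩

/-- uniqueness of the exponent in such factorizations -/
lemma exp_unique {z₀ : ℂ} {p q : ℕ} {F G : ℂ → ℂ}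
    (hF : ContinuousAt F z₀) (hG : ContinuousAt G z₀)
    (hF0 : F z₀ ≠ 0) (hG0 : G z₀ ≠ 0)
    (h : ∀ᶠ z in 𝓝 z₀, (z - z₀)^p * F z = (z - z₀)^q * G z) : p = q := by
  have key : ∀ {p' q' : ℕ} {F' G' : ℂ → ℂ}, ContinuousAt F' z₀ → F' z₀ ≠ 0 →
      ContinuousAt G' z₀ →
      (∀ᶠ z in 𝓝 z₀, (z - z₀)^p' * F' z = (z - z₀)^q' * G' z) → p' < q' → False := by
    intro p' q' F' G' hF' hF0' hG' h' hlt
    have hev : ∀ᶠ z in 𝓝[≠] z₀, F' z = (z - z₀)^(q' - p') * G' z := by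
      filter_upwards [eventually_nhdsWithin_of_eventually_nhds h', self_mem_nhdsWithin]
        with z hz hz'
      have hzz : (z - z₀) ≠ 0 := sub_ne_zero.mpr hz'
      have hp : (z - z₀)^q' = (z - z₀)^p' * (z - z₀)^(q' - p') := by
        rw [← pow_add]
        congr 1
        omega
      rw [hp, mul_assoc] at hz
      exact mul_left_cancel₀ (pow_ne_zero _ hzz) hz
    have ht1 : Tendsto (fun z => (z - z₀)^(q' - p') * G' z) (𝓝[≠] z₀) (𝓝 0) := by
      apply Tendsto.mono_left _ nhdsWithin_le_nhds
      have h2 : Tendsto (fun z => (z - z₀)^(q' - p') * G' z) (𝓝 z₀)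
          (𝓝 ((z₀ - z₀)^(q' - p') * G' z₀)) :=
        Tendsto.mul (((continuous_id.sub continuous_const).pow _).tendsto z₀) hG'
      rw [show (z₀ - z₀)^(q' - p') * G' z₀ = 0 by
        rw [sub_self, zero_pow (by omega), zero_mul]] at h2
      exact h2
    have ht2 : Tendsto F' (𝓝[≠] z₀) (𝓝 0) :=
      ht1.congr' (Filter.EventuallyEq.symm (hev : F' =ᶠ[𝓝[≠] z₀]
        fun z => (z - z₀)^(q' - p') * G' z))
    have ht3 : Tendsto F' (𝓝[≠] z₀) (𝓝 (F' z₀)) :=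
      hF'.tendsto.mono_left nhdsWithin_le_nhds
    exact hF0' (tendsto_nhds_unique ht3 ht2)
  by_contra hne
  rcases Nat.lt_or_ge p q with hlt | hge
  · exact key hF hF0 hG h hlt
  · have hlt : q < p := by omega
    have h' : ∀ᶠ z in 𝓝 z₀, (z - z₀)^q * G z = (z - z₀)^p * F z := by
      filter_upwards [h] with z hz
      exact hz.symm
    exact key hG hG0 hF h' hlt

lemma Rm_sub_w {a w z : ℂ} (hd : dd a z ≠ 0) :
    Rm a z - w = ((z - rt1 a w)*(z - rt2 a w))/dd a z := by
  rw [← Pq_eq_factor, Pq_eq_prod]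
  unfold Rm
  field_simp

/-- If `H^2` has an eventual factorization `(z-z₀)^n W` with `W` nonzero, then `H` itself
factors with exponent `k` where `n = 2k`. -/
lemma sq_factor {z₀ : ℂ} {H W₁ : ℂ → ℂ} {n : ℕ}
    (hHan : AnalyticAt ℂ H z₀) (hW₁c : ContinuousAt W₁ z₀) (hW₁0 : W₁ z₀ ≠ 0)
    (hev : ∀ᶠ z in 𝓝 z₀, (H z)^2 = (z - z₀)^n * W₁ z) :
    ∃ (k : ℕ) (h : ℂ → ℂ), AnalyticAt ℂ h z₀ ∧ h z₀ ≠ 0 ∧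
      (∀ᶠ z in 𝓝 z₀, H z = (z - z₀)^k * h z) ∧ n = 2*k := by
  have hHnot : ¬ (∀ᶠ z in 𝓝 z₀, H z = 0) := by
    intro hz
    have hWne : ∀ᶠ z in 𝓝 z₀, W₁ z ≠ 0 := hW₁c.eventually_ne hW₁0
    have hcomb : ∀ᶠ z in 𝓝[≠] z₀, False := by
      filter_upwards [eventually_nhdsWithin_of_eventually_nhds hz,
        eventually_nhdsWithin_of_eventually_nhds hev,
        eventually_nhdsWithin_of_eventually_nhds hWne, self_mem_nhdsWithin]
        with z h1 h2 h3 h4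
      have h2' : (z - z₀)^n * W₁ z = 0 := by rw [← h2, h1]; norm_num
      have h5 : (z - z₀)^n = 0 := by
        rcases mul_eq_zero.mp h2' with h | h
        · exact h
        · exact absurd h h3
      exact (pow_ne_zero n (sub_ne_zero.mpr h4)) h5
    obtain ⟨z, hz⟩ := hcomb.exists
    exact hz
  obtain ⟨k, h, hh, hh0, hkfac⟩ := exists_factor hHan hHnot
  have hsq : ∀ᶠ z in 𝓝 z₀, (z - z₀)^(2*k) * (h z)^2 = (z - z₀)^n * W₁ z := by
    filter_upwards [hkfac, hev] with z h1 h2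
    rw [← h2, h1]
    rw [mul_pow, ← pow_mul, Nat.mul_comm k 2]
  have h2k : 2*k = n :=
    exp_unique (hh.continuousAt.pow 2) hW₁c (pow_ne_zero 2 hh0) hW₁0 hsq
  exact ⟨k, h, hh, hh0, hkfac, by omega⟩

lemma main_odd_vanish {f : ℂ → ℂ}
    (hray : ∀ z : ℂ, z ≠ 0 → ∀ t : ℝ, 0 < t → f ((t : ℂ) * z) = f z)
    {a b : ℂ} (hA : Complex.abs a < 1) (hB : Complex.abs b < 1)
    (hba : b ≠ a) (hba' : b ≠ -a)
    {Ga Gb : ℂ → ℂ}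
    (hGac : ContinuousOn Ga (closedBall a 1)) (hGad : DifferentiableOn ℂ Ga (ball a 1))
    (hGab : ∀ z ∈ sphere a 1, Ga z = f z)
    (hGbc : ContinuousOn Gb (closedBall b 1)) (hGbd : DifferentiableOn ℂ Gb (ball b 1))
    (hGbb : ∀ z ∈ sphere b 1, Gb z = f z) :
    ∀ u : ℂ, Complex.abs u = 1 → f u = f (-u) := by
  set φ : ℂ → ℂ := fun u => (f u - f (-u))/2 with hφ
  have hφodd : ∀ u : ℂ, φ (-u) = -(φ u) := by
    intro u
    show (f (-u) - f (-(-u)))/2 = -((f u - f (-u))/2)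
    rw [neg_neg]
    ring
  have hHa_bd : ∀ z, Complex.abs (z - a) = 1 →
      Hf a Ga z = φ (z / ((Complex.abs z:ℝ):ℂ)) := by
    intro z hz
    rw [Hf_boundary hA hGab hray hz]
  have hHb_bd : ∀ z, Complex.abs (z - b) = 1 →
      Hf b Gb z = φ (z / ((Complex.abs z:ℝ):ℂ)) := by
    intro z hz
    rw [Hf_boundary hB hGbb hray hz]
  set Ma : ℂ → ℂ := fun z => (Hf a Ga z)^2 with hMa
  set Mb : ℂ → ℂ := fun z => (Hf b Gb z)^2 with hMb
  set X : ℂ → ℂ := trace a Ma with hX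
  set X' : ℂ → ℂ := trace b Mb with hX'
  have hMac : ContinuousOn Ma (closedBall a 1) := (Hf_contOn hA hGac).pow 2
  have hMad : DifferentiableOn ℂ Ma (ball a 1) := (Hf_diffOn hA hGad).pow 2
  have hMbc : ContinuousOn Mb (closedBall b 1) := (Hf_contOn hB hGbc).pow 2
  have hMbd : DifferentiableOn ℂ Mb (ball b 1) := (Hf_diffOn hB hGbd).pow 2
  have hXc : ContinuousOn X (closedBall 0 1) := trace_contOn hA hMac
  have hXd : DifferentiableOn ℂ X (ball 0 1) := trace_diffOn hA hMac hMad
  have hX'c : ContinuousOn X' (closedBall 0 1) := trace_contOn hB hMbc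
  have hX'd : DifferentiableOn ℂ X' (ball 0 1) := trace_diffOn hB hMbc hMbd
  -- boundary values
  have hXbd : ∀ u : ℂ, Complex.abs u = 1 → X (u^2) = (φ u)^2 := by
    intro u hu
    rw [hX, trace_sphere hA hu]
    have hu' : Complex.abs (-u) = 1 := by rwa [map_neg_eq_map]
    have h1 : Hf a Ga (qpt a u) = φ u := by
      rw [hHa_bd _ (qpt_sphere hA hu), qpt_unit hA hu]
    have h2 : Hf a Ga (qpt a (-u)) = φ (-u) := by
      rw [hHa_bd _ (qpt_sphere hA hu'), qpt_unit hA hu']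
    show ((Hf a Ga (qpt a u))^2 + (Hf a Ga (qpt a (-u)))^2)/2 = (φ u)^2
    rw [h1, h2, hφodd u]
    ring
  have hX'bd : ∀ u : ℂ, Complex.abs u = 1 → X' (u^2) = (φ u)^2 := by
    intro u hu
    rw [hX', trace_sphere hB hu]
    have hu' : Complex.abs (-u) = 1 := by rwa [map_neg_eq_map]
    have h1 : Hf b Gb (qpt b u) = φ u := by
      rw [hHb_bd _ (qpt_sphere hB hu), qpt_unit hB hu]
    have h2 : Hf b Gb (qpt b (-u)) = φ (-u) := by
      rw [hHb_bd _ (qpt_sphere hB hu'), qpt_unit hB hu']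
    show ((Hf b Gb (qpt b u))^2 + (Hf b Gb (qpt b (-u)))^2)/2 = (φ u)^2
    rw [h1, h2, hφodd u]
    ring
  -- X = X' on the closed unit ball
  have hXX' : ∀ w ∈ closedBall (0:ℂ) 1, X w = X' w := by
    apply eqOn_closedBall_of_eqOn_sphere hXc hXd hX'c hX'd
    intro w hw
    have hw1 : Complex.abs w = 1 := by
      have := mem_sp.mp hw
      simpa using this
    have hu2 : (sq0 w)^2 = w := sq0_sq w
    have hu1 : Complex.abs (sq0 w) = 1 := by
      rw [abs_sq0, hw1, Real.sqrt_one]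
    rw [← hu2, hXbd _ hu1, hX'bd _ hu1]
  -- compose relations
  have hXRa : ∀ z : ℂ, Complex.abs (z - a) ≤ 1 → X (Rm a z) = (Hf a Ga z)^2 := by
    intro z hz
    rw [hX, trace_compose (dd_ne hA hz)]
    show (Ma z + Ma (invo a z))/2 = (Hf a Ga z)^2
    rw [hMa]
    simp only
    rw [Hf_odd hA hz]
    ring
  have hXRb : ∀ z : ℂ, Complex.abs (z - b) ≤ 1 → X (Rm b z) = (Hf b Gb z)^2 := by
    intro z hz
    have hmem : Rm b z ∈ closedBall (0:ℂ) 1 := by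
      rw [mem_cb]
      simpa using abs_Rm_le hB hz
    rw [hXX' _ hmem, hX', trace_compose (dd_ne hB hz)]
    show (Mb z + Mb (invo b z))/2 = (Hf b Gb z)^2
    rw [hMb]
    simp only
    rw [Hf_odd hB hz]
    ring
  -- Main claim : X ≡ 0
  have hXzero : ∀ w ∈ closedBall (0:ℂ) 1, X w = 0 := by
    by_contra hcon
    push_neg at hcon
    obtain ⟨w₁, hw₁, hXw₁⟩ := hcon
    have hball : ∃ w₂ ∈ ball (0:ℂ) 1, X w₂ ≠ 0 := by
      by_contra hz
      push_neg at hz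
      apply hXw₁
      have hcw : Tendsto X (𝓝[ball (0:ℂ) 1] w₁) (𝓝 (X w₁)) :=
        ((hXc w₁ hw₁).mono ball_subset_closedBall).tendsto
      have hmem : w₁ ∈ closure (ball (0:ℂ) 1) := by
        rwa [closure_ball (0:ℂ) one_ne_zero]
      have hne : (𝓝[ball (0:ℂ) 1] w₁).NeBot := mem_closure_iff_nhdsWithin_neBot.mp hmem
      have ht0 : Tendsto X (𝓝[ball (0:ℂ) 1] w₁) (𝓝 0) := by
        apply Tendsto.congr' _ tendsto_const_nhds
        filter_upwards [self_mem_nhdsWithin] with w hw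
        exact (hz w hw).symm
      exact tendsto_nhds_unique hcw ht0
    obtain ⟨w₂, hw₂, hXw₂⟩ := hball
    have hXan : AnalyticOnNhd ℂ X (ball 0 1) := hXd.analyticOnNhd isOpen_ball
    have hα : alph a ∈ ball (0:ℂ) 1 := by
      rw [mem_bl]
      simpa using alph_lt_one hA
    have hXα : AnalyticAt ℂ X (alph a) := hXan _ hα
    have hnot : ¬ (∀ᶠ w in 𝓝 (alph a), X w = 0) := by
      intro hev
      have := hXan.eqOn_zero_of_preconnected_of_eventuallyEq_zero
        (convex_ball (0:ℂ) 1).isPreconnected hα hev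
      exact hXw₂ (this hw₂)
    obtain ⟨m, W, hW, hW0, hfac⟩ := exists_factor hXα hnot
    -- ===== a-side : m is odd =====
    have hzαball : zfix a ∈ ball a 1 := mem_bl.mpr (zfix_in_ball hA)
    have hddα : dd a (zfix a) ≠ 0 := dd_zfix_ne hA
    have hRacont : ContinuousAt (Rm a) (zfix a) := continuousAt_Rm hddα
    have hRaval : Rm a (zfix a) = alph a := Rm_zfix hA
    have hfacz : ∀ᶠ z in 𝓝 (zfix a), X (Rm a z) = (Rm a z - alph a)^m * W (Rm a z) := by
      have ht : Tendsto (Rm a) (𝓝 (zfix a)) (𝓝 (alph a)) := by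
        rw [← hRaval]; exact hRacont.tendsto
      exact ht.eventually hfac
    have hddev : ∀ᶠ z in 𝓝 (zfix a), dd a z ≠ 0 :=
      (continuous_dd a).continuousAt.eventually_ne hddα
    have hblev : ∀ᶠ z in 𝓝 (zfix a), z ∈ ball a 1 := isOpen_ball.eventually_mem hzαball
    set W₁ : ℂ → ℂ := fun z => W (Rm a z) / (dd a z)^m with hW₁
    have hW₁c : ContinuousAt W₁ (zfix a) := by
      apply ContinuousAt.div
      · have hWc : ContinuousAt W (Rm a (zfix a)) := by
          rw [hRaval]; exact hW.continuousAt
        exact hWc.comp hRacont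
      · exact ((continuous_dd a).continuousAt).pow m
      · exact pow_ne_zero m hddα
    have hW₁0 : W₁ (zfix a) ≠ 0 := by
      rw [hW₁]
      simp only
      rw [hRaval]
      exact div_ne_zero hW0 (pow_ne_zero m hddα)
    have hHfac : ∀ᶠ z in 𝓝 (zfix a), (Hf a Ga z)^2 = (z - zfix a)^(2*m) * W₁ z := by
      filter_upwards [hfacz, hddev, hblev] with z h1 h2 h3
      rw [← hXRa z (mem_bl.mp h3).le, h1, Rm_sub_alph hA h2]
      rw [div_pow, ← pow_mul]
      rw [hW₁]
      simp only
      field_simp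
    have hHan : AnalyticAt ℂ (Hf a Ga) (zfix a) :=
      ((Hf_diffOn hA hGad).analyticOnNhd isOpen_ball) _ hzαball
    obtain ⟨k, hsm, hhan, hh0, hkfac, h2k⟩ := sq_factor hHan hW₁c hW₁0 hHfac
    have hkm : k = m := by omega
    -- parity of k via the involution
    have hιev : ∀ᶠ z in 𝓝 (zfix a), Hf a Ga (invo a z) = -(Hf a Ga z) := by
      filter_upwards [hblev] with z h3
      exact Hf_odd hA (mem_bl.mp h3).le
    have hιcont : ContinuousAt (invo a) (zfix a) := continuousAt_invo hddα
    have hιval : invo a (zfix a) = zfix a := invo_fix hA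
    have hkfacι : ∀ᶠ z in 𝓝 (zfix a), Hf a Ga (invo a z) =
        (invo a z - zfix a)^k * hsm (invo a z) := by
      have ht : Tendsto (invo a) (𝓝 (zfix a)) (𝓝 (zfix a)) := by
        have h9 := hιcont.tendsto
        rwa [hιval] at h9
      exact ht.eventually hkfac
    have hpunct : ∀ᶠ z in 𝓝[≠] (zfix a), -(hsm z) =
        ((((normSq a:ℝ):ℂ) - 1)/(dd a z * dd a (zfix a)))^k * hsm (invo a z) := by
      filter_upwards [eventually_nhdsWithin_of_eventually_nhds hkfac,
        eventually_nhdsWithin_of_eventually_nhds hkfacι,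
        eventually_nhdsWithin_of_eventually_nhds hιev,
        eventually_nhdsWithin_of_eventually_nhds hddev, self_mem_nhdsWithin]
        with z h1 h2 h3 h4 h5
      have hzz : (z - zfix a) ≠ 0 := sub_ne_zero.mpr h5
      set ez : ℂ := (((normSq a:ℝ):ℂ) - 1)/(dd a z * dd a (zfix a)) with hez
      clear_value ez
      have hsub : invo a z - zfix a = ez * (z - zfix a) := by
        have h7 := invo_sub h4 hddα
        rw [hιval] at h7
        rw [h7, hez]
        ring
      rw [h2, h1, hsub, mul_pow] at h3
      have h6 : (z - zfix a)^k * (-(hsm z)) = (z - zfix a)^k *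
          (ez^k * hsm (invo a z)) := by
        linear_combination -h3
      exact mul_left_cancel₀ (pow_ne_zero _ hzz) h6
    have heval : ((((normSq a:ℝ):ℂ) - 1)/(dd a (zfix a) * dd a (zfix a))) = -1 := by
      rw [dd_zfix hA]
      rw [div_eq_iff (mul_ne_zero (tA_ne_zeroC hA) (tA_ne_zeroC hA))]
      have := tA_sqC hA
      linear_combination this
    have hLlim : Tendsto (fun z => -(hsm z)) (𝓝[≠] (zfix a)) (𝓝 (-(hsm (zfix a)))) :=
      ((hhan.continuousAt.neg).tendsto).mono_left nhdsWithin_le_nhds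
    have hRlim : Tendsto (fun z =>
        ((((normSq a:ℝ):ℂ) - 1)/(dd a z * dd a (zfix a)))^k * hsm (invo a z))
        (𝓝[≠] (zfix a)) (𝓝 ((-1:ℂ)^k * hsm (zfix a))) := by
      apply Tendsto.mono_left _ nhdsWithin_le_nhds
      have hc1 : Tendsto (fun z => ((((normSq a:ℝ):ℂ) - 1)/(dd a z * dd a (zfix a)))^k)
          (𝓝 (zfix a)) (𝓝 ((-1:ℂ)^k)) := by
        rw [← heval]
        exact ContinuousAt.pow (ContinuousAt.div continuousAt_const
          (((continuous_dd a).continuousAt).mul continuousAt_const)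
          (mul_ne_zero hddα hddα)) k
      have hc2 : Tendsto (fun z => hsm (invo a z)) (𝓝 (zfix a)) (𝓝 (hsm (zfix a))) := by
        have h9 : ContinuousAt hsm (invo a (zfix a)) := by
          rw [hιval]; exact hhan.continuousAt
        have h10 := (h9.comp hιcont).tendsto
        simp only [Function.comp] at h10
        rwa [hιval] at h10
      exact hc1.mul hc2
    have hLlim' : Tendsto (fun z =>
        ((((normSq a:ℝ):ℂ) - 1)/(dd a z * dd a (zfix a)))^k * hsm (invo a z))
        (𝓝[≠] (zfix a)) (𝓝 (-(hsm (zfix a)))) :=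
      hLlim.congr' (hpunct : (fun z => -(hsm z)) =ᶠ[𝓝[≠] (zfix a)] _)
    have hkey : -(hsm (zfix a)) = (-1:ℂ)^k * hsm (zfix a) :=
      tendsto_nhds_unique hLlim' hRlim
    have hkodd : (-1:ℂ)^k = -1 := by
      rcases Nat.even_or_odd k with he | ho
      · exfalso
        rw [he.neg_one_pow, one_mul] at hkey
        apply hh0
        have h11 : (2:ℂ) * hsm (zfix a) = 0 := by linear_combination -hkey
        rcases mul_eq_zero.mp h11 with h | h
        · norm_num at h
        · exact h
      · exact ho.neg_one_pow
    have hmodd : (-1:ℂ)^m = -1 := by rwa [hkm] at hkodd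
    -- ===== b-side : m is even =====
    have hDqb : Dq b (alph a) ≠ 0 := by
      intro h0
      have heq := Dq_unique_root hB h0 (alph_lt_one hA)
      rcases alph_inj hA hB heq with h | h
      · exact hba h
      · exact hba' h
    set z₁ : ℂ := rt1 b (alph a) with hz₁def
    set z₂ : ℂ := rt2 b (alph a) with hz₂def
    have hz₁ball : z₁ ∈ ball b 1 := rt1_mem_bl hB (alph_lt_one hA)
    have hz₁₂ : z₁ ≠ z₂ := by
      intro h
      apply sq0_ne_zero hDqb
      rw [hz₁def, hz₂def] at h
      unfold rt1 rt2 at h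
      linear_combination h
    have hRbval : Rm b z₁ = alph a := root_Rm hB (rt1_root b (alph a))
    have hddb : dd b z₁ ≠ 0 := dd_ne hB (mem_bl.mp hz₁ball).le
    have hRbcont : ContinuousAt (Rm b) z₁ := continuousAt_Rm hddb
    have hfacz' : ∀ᶠ z in 𝓝 z₁, X (Rm b z) = (Rm b z - alph a)^m * W (Rm b z) := by
      have ht : Tendsto (Rm b) (𝓝 z₁) (𝓝 (alph a)) := by
        rw [← hRbval]; exact hRbcont.tendsto
      exact ht.eventually hfac
    have hddev' : ∀ᶠ z in 𝓝 z₁, dd b z ≠ 0 :=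
      (continuous_dd b).continuousAt.eventually_ne hddb
    have hblev' : ∀ᶠ z in 𝓝 z₁, z ∈ ball b 1 := isOpen_ball.eventually_mem hz₁ball
    set W₂ : ℂ → ℂ := fun z => (z - z₂)^m * W (Rm b z) / (dd b z)^m with hW₂
    have hW₂c : ContinuousAt W₂ z₁ := by
      apply ContinuousAt.div
      · apply ContinuousAt.mul
        · fun_prop
        · have hWc : ContinuousAt W (Rm b z₁) := by
            rw [hRbval]; exact hW.continuousAt
          exact hWc.comp hRbcont
      · exact ((continuous_dd b).continuousAt).pow m
      · exact pow_ne_zero m hddb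
    have hW₂0 : W₂ z₁ ≠ 0 := by
      rw [hW₂]
      simp only
      rw [hRbval]
      apply div_ne_zero _ (pow_ne_zero m hddb)
      exact mul_ne_zero (pow_ne_zero m (sub_ne_zero.mpr hz₁₂)) hW0
    have hHfac' : ∀ᶠ z in 𝓝 z₁, (Hf b Gb z)^2 = (z - z₁)^m * W₂ z := by
      filter_upwards [hfacz', hddev', hblev'] with z h1 h2 h3
      rw [← hXRb z (mem_bl.mp h3).le, h1]
      rw [show Rm b z - alph a = ((z - z₁)*(z - z₂))/dd b z from Rm_sub_w h2]
      rw [div_pow, mul_pow]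
      rw [hW₂]
      simp only
      field_simp
      try ring
    have hHban : AnalyticAt ℂ (Hf b Gb) z₁ :=
      ((Hf_diffOn hB hGbd).analyticOnNhd isOpen_ball) _ hz₁ball
    obtain ⟨k', hsm', hhan', hh0', hkfac', h2k'⟩ := sq_factor hHban hW₂c hW₂0 hHfac'
    -- m = 2 k' even, contradiction with m odd
    rw [h2k'] at hmodd
    rw [pow_mul] at hmodd
    norm_num at hmodd
  -- conclude : φ ≡ 0 on the circle
  intro u hu
  have hmem : u^2 ∈ closedBall (0:ℂ) 1 := by
    rw [mem_cb]
    rw [sub_zero, map_pow, hu]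
    norm_num
  have h := hXzero (u^2) hmem
  rw [hXbd u hu] at h
  have hφ0 : φ u = 0 := by
    have := sq_eq_zero_iff.mp h
    exact this
  have : (f u - f (-u))/2 = 0 := hφ0
  linear_combination 2 * this

lemma continuousOn_Rm {a : ℂ} (hA : Complex.abs a < 1) :
    ContinuousOn (Rm a) (closedBall a 1) :=
  fun z hz => (continuousAt_Rm (dd_ne hA (mem_cb.mp hz))).continuousWithinAt

end S17

section FinalAssembly

open S17

/-- A function `f` extends holomorphically from the circle `bΔ(a,ρ)`. -/
def ExtHol (f : ℂ → ℂ) (a : ℂ) (ρ : ℝ) : Prop :=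
  ∃ g : ℂ → ℂ, ContinuousOn g (closedBall a ρ) ∧
    DifferentiableOn ℂ g (ball a ρ) ∧ ∀ z ∈ sphere a ρ, g z = f z

theorem stmt17 (f : ℂ → ℂ) (hf : ContinuousOn f {(0 : ℂ)}ᶜ)
    (hray : ∀ z : ℂ, z ≠ 0 → ∀ t : ℝ, 0 < t → f ((t : ℂ) * z) = f z)
    (a b : ℂ) (ha : ‖a‖ < 1) (hb : ‖b‖ < 1)
    (hba : b ≠ a) (hba' : b ≠ -a)
    (hexta : ExtHol f a 1) (hextb : ExtHol f b 1) :
    (∃ g : ℂ → ℂ, ContinuousOn g (closedBall 0 1) ∧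
      DifferentiableOn ℂ g (ball 0 1) ∧
      ∀ z : ℂ, z ≠ 0 → f z = g (z / (‖z‖ : ℂ))) ∧
    (∀ z : ℂ, z ≠ 0 → ∀ t : ℝ, t ≠ 0 → f ((t : ℂ) * z) = f z) ∧
    (∀ (c : ℂ) (ρ : ℝ), 0 < ρ → ‖c‖ < ρ → ExtHol f c ρ) := by
  obtain ⟨Ga, hGac, hGad, hGab⟩ := hexta
  obtain ⟨Gb, hGbc, hGbd, hGbb⟩ := hextb
  have hfneg : ∀ u : ℂ, Complex.abs u = 1 → f u = f (-u) :=
    main_odd_vanish hray ha hb hba hba' hGac hGad hGab hGbc hGbd hGbb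
  have hfneg' : ∀ z : ℂ, z ≠ 0 → f (-z) = f z := by
    intro z hz
    have hu1 := abs_uvec hz
    have h1 : f z = f (z / ((Complex.abs z:ℝ):ℂ)) := f_ray hray hz
    have h2 : f (-z) = f (-(z / ((Complex.abs z:ℝ):ℂ))) := by
      have h3 := f_ray hray (neg_ne_zero.mpr hz)
      rw [h3]
      rw [map_neg_eq_map, neg_div]
    rw [h1, h2, ← hfneg _ hu1]
  set Y : ℂ → ℂ := trace a Ga with hYdef
  have hYc : ContinuousOn Y (closedBall 0 1) := trace_contOn ha hGac
  have hYd : DifferentiableOn ℂ Y (ball 0 1) := trace_diffOn ha hGac hGad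
  have hfq : ∀ u : ℂ, Complex.abs u = 1 → f (qpt a u) = f u := by
    intro u hu
    have hq0 : qpt a u ≠ 0 := sphere_ne_zero ha (qpt_sphere ha hu)
    rw [f_ray hray hq0, qpt_unit ha hu]
  have hYbd : ∀ u : ℂ, Complex.abs u = 1 → Y (u^2) = f u := by
    intro u hu
    rw [hYdef, trace_sphere ha hu]
    have hu' : Complex.abs (-u) = 1 := by rwa [map_neg_eq_map]
    have h1 : Ga (qpt a u) = f u := by
      rw [hGab _ (mem_sp.mpr (qpt_sphere ha hu))]
      exact hfq u hu
    have h2 : Ga (qpt a (-u)) = f u := by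
      rw [hGab _ (mem_sp.mpr (qpt_sphere ha hu'))]
      rw [hfq (-u) hu']
      exact (hfneg u hu).symm
    rw [h1, h2]
    ring
  have hfz : ∀ z : ℂ, z ≠ 0 → f z = Y ((z / ((Complex.abs z:ℝ):ℂ))^2) := by
    intro z hz
    rw [hYbd _ (abs_uvec hz)]
    exact f_ray hray hz
  refine ⟨⟨fun ζ => Y (ζ^2), ?_, ?_, ?_⟩, ?_, ?_⟩
  · -- continuity of g
    apply hYc.comp (continuous_pow 2).continuousOn
    intro ζ hζ
    rw [mem_cb] at hζ ⊢
    rw [sub_zero] at hζ ⊢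
    rw [map_pow]
    nlinarith [Complex.abs.nonneg ζ]
  · -- differentiability of g
    apply hYd.comp ((differentiable_pow 2).differentiableOn)
    intro ζ hζ
    rw [mem_bl] at hζ ⊢
    rw [sub_zero] at hζ ⊢
    rw [map_pow]
    nlinarith [Complex.abs.nonneg ζ]
  · -- boundary representation
    intro z hz
    exact hfz z hz
  · -- ray invariance for all t ≠ 0
    intro z hz t ht
    rcases lt_or_gt_of_ne ht with hlt | hgt
    · have h1 : ((t:ℝ):ℂ) * z = ((-t:ℝ):ℂ) * (-z) := by push_cast; ring
      rw [h1, hray _ (neg_ne_zero.mpr hz) (-t) (by linarith)]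
      exact hfneg' z hz
    · exact hray z hz t hgt
  · -- extension from every circle
    intro c ρ hρ hcρ
    set a' : ℂ := c / ((ρ:ℝ):ℂ) with ha'def
    have hρC : ((ρ:ℝ):ℂ) ≠ 0 := by
      intro h
      have : (ρ:ℝ) = 0 := by exact_mod_cast h
      linarith
    have ha' : Complex.abs a' < 1 := by
      rw [ha'def, map_div₀, Complex.abs_ofReal, abs_of_pos hρ, div_lt_one hρ]
      exact hcρ
    have hmap_cb : ∀ z ∈ closedBall c ρ, Complex.abs (z/((ρ:ℝ):ℂ) - a') ≤ 1 := by
      intro z hz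
      rw [ha'def, div_sub_div_same, map_div₀, Complex.abs_ofReal, abs_of_pos hρ,
        div_le_one hρ]
      exact mem_cb.mp hz
    have hmap_bl : ∀ z ∈ ball c ρ, Complex.abs (z/((ρ:ℝ):ℂ) - a') < 1 := by
      intro z hz
      rw [ha'def, div_sub_div_same, map_div₀, Complex.abs_ofReal, abs_of_pos hρ,
        div_lt_one hρ]
      exact mem_bl.mp hz
    refine ⟨fun z => Y (Rm a' (z/((ρ:ℝ):ℂ))), ?_, ?_, ?_⟩
    · -- continuity
      apply hYc.comp
      · apply (continuousOn_Rm ha').comp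
        · exact (continuous_id.div_const _).continuousOn
        · intro z hz
          exact mem_cb.mpr (hmap_cb z hz)
      · intro z hz
        rw [mem_cb, sub_zero]
        exact abs_Rm_le ha' (hmap_cb z hz)
    · -- differentiability
      have hinner : DifferentiableOn ℂ (fun z => Rm a' (z/((ρ:ℝ):ℂ))) (ball c ρ) := by
        intro z hz
        have hd1 : DifferentiableAt ℂ (fun z : ℂ => Rm a' (z/((ρ:ℝ):ℂ))) z :=
          (differentiableAt_Rm (dd_ne ha' (hmap_bl z hz).le)).comp (f := fun z : ℂ => z/((ρ:ℝ):ℂ)) z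
            (differentiableAt_id.div_const _)
        exact hd1.differentiableWithinAt
      apply hYd.comp hinner
      intro z hz
      rw [mem_bl, sub_zero]
      exact abs_Rm_lt ha' (hmap_bl z hz)
    · -- boundary values
      intro z hzs
      have hzsp : Complex.abs (z - c) = ρ := mem_sp.mp hzs
      have hz0 : z ≠ 0 := by
        intro h
        rw [h] at hzsp
        simp only [zero_sub, map_neg_eq_map] at hzsp
        linarith [(show Complex.abs c < ρ from hcρ), hzsp.symm.le]
      have hzc : z ≠ c := by
        intro h
        rw [h] at hzsp
        simp at hzsp
        linarith
      have hcz : conj z ≠ 0 := by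
        intro h
        apply hz0
        simpa using congrArg conj h
      have habsz : ((Complex.abs z : ℝ):ℂ) ≠ 0 := by
        intro h
        apply hz0
        have : Complex.abs z = 0 := by exact_mod_cast h
        exact Complex.abs.eq_zero.mp this
      have hζ : (z - c) * (conj z - conj c) = ((ρ^2 : ℝ):ℂ) := by
        have := sphere_conj hzsp
        rwa [map_sub] at this
      have hdd : dd a' (z/((ρ:ℝ):ℂ)) ≠ 0 := dd_ne ha' (hmap_cb z (sphere_subset_closedBall hzs))
      have e1 : Rm a' (z/((ρ:ℝ):ℂ)) * conj z = z := by
        have hzc' : z - c ≠ 0 := sub_ne_zero.mpr hzc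
        push_cast at hζ
        unfold Rm dd
        rw [ha'def]
        rw [map_div₀, Complex.conj_ofReal]
        have hden : z * conj c - c * conj c + ((ρ:ℝ):ℂ)^2 ≠ 0 := by
          have hid : z * conj c - c * conj c + ((ρ:ℝ):ℂ)^2 = (z - c) * conj z := by
            linear_combination -hζ
          rw [hid]
          exact mul_ne_zero hzc' hcz
        have hdd' : (1 : ℂ) + conj c / ((ρ:ℝ):ℂ) * (z/((ρ:ℝ):ℂ) - c/((ρ:ℝ):ℂ)) ≠ 0 := by
          have h9 := hdd
          rw [ha'def] at h9
          unfold dd at h9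
          rwa [map_div₀, Complex.conj_ofReal] at h9
        rw [div_mul_eq_mul_div, div_eq_iff hdd']
        field_simp
        linear_combination hζ
      have e2 : (z / ((Complex.abs z : ℝ):ℂ))^2 * conj z = z := by
        have hsq : ((Complex.abs z : ℝ):ℂ)^2 = z * conj z := by
          rw [← Complex.ofReal_pow, Complex.sq_abs, Complex.mul_conj]
        field_simp
        linear_combination -hsq
      have h1 : Rm a' (z/((ρ:ℝ):ℂ)) = (z / ((Complex.abs z : ℝ):ℂ))^2 :=
        mul_right_cancel₀ hcz (e1.trans e2.symm)
      show Y (Rm a' (z/((ρ:ℝ):ℂ))) = f z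
      rw [h1, ← hfz z hz0]

end FinalAssembly
end
end

section
/- Let 0 < a < 1 be real and define Φ(ζ) = (a+ζ)/|a+ζ| for ζ on the unit circle {ζ ∈ ℂ : |ζ| = 1}. Then Φ is a homeomorphism of the unit circle onto itself, and the function f : ℂ \ {0} → ℂ defined by f(z) = Φ⁻¹(z/|z|) is continuous, satisfies f(tz) = f(z) for all z ≠ 0 and all real t > 0, and extends holomorphically from both circles bΔ(a,1) and bΔ(−a,1). -/
open Complex Metric ComplexConjugate

/-- The radial factor of the inverse map. -/
noncomputable def stmt18R (a : ℝ) (w : ℂ) : ℝ :=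
  a * w.re + Real.sqrt (a ^ 2 * w.re ^ 2 + 1 - a ^ 2)

/-- The explicit inverse `Ψ` of `Φ(ζ) = (a+ζ)/|a+ζ|`. -/
noncomputable def stmt18Psi (a : ℝ) (w : ℂ) : ℂ :=
  ((stmt18R a w : ℝ) : ℂ) * w - (a : ℂ)

lemma stmt18R_pos (a : ℝ) (ha0 : 0 < a) (ha1 : a < 1) (w : ℂ) : 0 < stmt18R a w := by
  have h1 : |a * w.re| < Real.sqrt (a ^ 2 * w.re ^ 2 + 1 - a ^ 2) := by
    rw [← Real.sqrt_sq_eq_abs]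
    apply Real.sqrt_lt_sqrt (sq_nonneg _)
    nlinarith
  have h2 : -(a * w.re) ≤ |a * w.re| := neg_le_abs _
  unfold stmt18R
  linarith

lemma stmt18_quad (a : ℝ) (ha0 : 0 < a) (ha1 : a < 1) (w : ℂ) :
    (stmt18R a w) ^ 2 - 2 * a * w.re * (stmt18R a w) - (1 - a ^ 2) = 0 := by
  have hD : (0:ℝ) ≤ a ^ 2 * w.re ^ 2 + 1 - a ^ 2 := by nlinarith
  unfold stmt18R
  linear_combination Real.sq_sqrt hD

lemma stmt18Psi_sphere (a : ℝ) (ha0 : 0 < a) (ha1 : a < 1) (w : ℂ)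
    (hw : ‖w‖ = 1) : ‖stmt18Psi a w‖ = 1 := by
  have h1 : w.re ^ 2 + w.im ^ 2 = 1 := by
    have := Complex.sq_norm w
    rw [hw, Complex.normSq_apply] at this
    nlinarith
  have hq := stmt18_quad a ha0 ha1 w
  have h2 : ‖stmt18Psi a w‖ ^ 2 = 1 := by
    rw [Complex.sq_norm, Complex.normSq_apply]
    simp only [stmt18Psi, Complex.sub_re, Complex.sub_im, Complex.mul_re, Complex.mul_im,
      Complex.ofReal_re, Complex.ofReal_im]
    nlinarith
  have h3 : 0 ≤ ‖stmt18Psi a w‖ := norm_nonneg _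
  nlinarith

lemma stmt18_key1 (a : ℝ) (ha0 : 0 < a) (ha1 : a < 1) (ζ : ℂ)
    (hζ : ‖ζ‖ = 1) :
    stmt18Psi a (((a : ℂ) + ζ) / (‖(a : ℂ) + ζ‖ : ℂ)) = ζ := by
  have h1 : ζ.re ^ 2 + ζ.im ^ 2 = 1 := by
    have := Complex.sq_norm ζ
    rw [hζ, Complex.normSq_apply] at this
    nlinarith
  have hre : |ζ.re| ≤ 1 := by rw [← hζ]; exact Complex.abs_re_le_norm ζ
  have hne : (a : ℂ) + ζ ≠ 0 := by
    intro h
    have : ζ = -(a : ℂ) := by linear_combination h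
    rw [this] at hζ
    simp [Complex.norm_real, abs_of_pos ha0] at hζ
    linarith
  set r := ‖(a : ℂ) + ζ‖ with hr
  have hr0 : 0 < r := norm_pos_iff.mpr hne
  have hr2 : r ^ 2 = a ^ 2 + 2 * a * ζ.re + 1 := by
    rw [hr, Complex.sq_norm, Complex.normSq_apply]
    simp only [Complex.add_re, Complex.add_im, Complex.ofReal_re, Complex.ofReal_im]
    nlinarith
  set w := ((a : ℂ) + ζ) / (r : ℂ) with hwdef
  have hwre : w.re = (a + ζ.re) / r := by
    rw [hwdef, div_eq_inv_mul, ← Complex.ofReal_inv, Complex.re_ofReal_mul]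
    simp only [Complex.add_re, Complex.ofReal_re]
    field_simp
  have habs : 0 ≤ a * ζ.re + 1 := by nlinarith [abs_le.mp hre]
  have h4 : (0:ℝ) ≤ (a * ζ.re + 1) / r := div_nonneg habs hr0.le
  have h5 : a ^ 2 * w.re ^ 2 + 1 - a ^ 2 = ((a * ζ.re + 1) / r) ^ 2 := by
    rw [hwre]
    field_simp
    nlinarith [hr2]
  have hR : stmt18R a w = r := by
    unfold stmt18R
    rw [h5, Real.sqrt_sq h4, hwre]
    field_simp
    nlinarith [hr2]
  have hrC : ((r : ℝ) : ℂ) ≠ 0 := by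
    simpa using hr0.ne'
  rw [stmt18Psi, hR, hwdef]
  field_simp
  ring

lemma stmt18_key2 (a : ℝ) (ha0 : 0 < a) (ha1 : a < 1) (ζ : ℂ)
    (hζ : ‖ζ‖ = 1) :
    stmt18Psi a ((ζ - (a : ℂ)) / (‖ζ - (a : ℂ)‖ : ℂ))
      = (ζ - (a : ℂ)) / (1 - (a : ℂ) * ζ) := by
  have h1 : ζ.re ^ 2 + ζ.im ^ 2 = 1 := by
    have := Complex.sq_norm ζ
    rw [hζ, Complex.normSq_apply] at this
    nlinarith
  have hre : |ζ.re| ≤ 1 := by rw [← hζ]; exact Complex.abs_re_le_norm ζ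
  have hne : ζ - (a : ℂ) ≠ 0 := by
    intro h
    have : ζ = (a : ℂ) := by linear_combination h
    rw [this] at hζ
    simp [Complex.norm_real, abs_of_pos ha0] at hζ
    linarith
  set s := ‖ζ - (a : ℂ)‖ with hs
  have hs0 : 0 < s := norm_pos_iff.mpr hne
  have hs2 : s ^ 2 = 1 - 2 * a * ζ.re + a ^ 2 := by
    rw [hs, Complex.sq_norm, Complex.normSq_apply]
    simp only [Complex.sub_re, Complex.sub_im, Complex.ofReal_re, Complex.ofReal_im]
    nlinarith
  set w := (ζ - (a : ℂ)) / (s : ℂ) with hwdef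
  have hwre : w.re = (ζ.re - a) / s := by
    rw [hwdef, div_eq_inv_mul, ← Complex.ofReal_inv, Complex.re_ofReal_mul]
    simp only [Complex.sub_re, Complex.ofReal_re]
    field_simp
  have habs : 0 ≤ 1 - a * ζ.re := by nlinarith [abs_le.mp hre]
  have h4 : (0:ℝ) ≤ (1 - a * ζ.re) / s := div_nonneg habs hs0.le
  have h5 : a ^ 2 * w.re ^ 2 + 1 - a ^ 2 = ((1 - a * ζ.re) / s) ^ 2 := by
    rw [hwre]
    field_simp
    nlinarith [hs2]
  have hR : stmt18R a w = (1 - a ^ 2) / s := by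
    unfold stmt18R
    rw [h5, Real.sqrt_sq h4, hwre]
    field_simp
    ring
  -- complex identity for s^2
  have hc : ζ * (starRingEnd ℂ) ζ = 1 := by
    rw [Complex.mul_conj]
    rw [← Complex.sq_norm, hζ]
    norm_num
  have hs2c : ((s : ℝ) : ℂ) ^ 2 = (ζ - (a : ℂ)) * ((starRingEnd ℂ) ζ - (a : ℂ)) := by
    have : ((s : ℝ) : ℂ) ^ 2 = ((Complex.normSq (ζ - (a : ℂ)) : ℝ) : ℂ) := by
      rw [← Complex.ofReal_pow, hs, Complex.sq_norm]
    rw [this, ← Complex.mul_conj]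
    simp [map_sub, Complex.conj_ofReal]
  have hsC : ((s : ℝ) : ℂ) ≠ 0 := by simpa using hs0.ne'
  have hden : (1 : ℂ) - (a : ℂ) * ζ ≠ 0 := by
    intro h
    have h2 : ‖(a : ℂ) * ζ‖ = 1 := by
      have : (a : ℂ) * ζ = 1 := by linear_combination -h
      rw [this]; simp
    rw [norm_mul, hζ, Complex.norm_real, Real.norm_eq_abs, abs_of_pos ha0] at h2
    simp at h2
    linarith
  rw [stmt18Psi, hR, hwdef]
  have e1 : ((((1 - a ^ 2) / s : ℝ)) : ℂ) * ((ζ - (a : ℂ)) / ((s : ℝ) : ℂ)) - (a : ℂ)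
      = ((1 - (a : ℂ) ^ 2) * (ζ - (a : ℂ)) - (a : ℂ) * ((s : ℝ) : ℂ) ^ 2) / ((s : ℝ) : ℂ) ^ 2 := by
    push_cast
    field_simp
  rw [e1, div_eq_div_iff (pow_ne_zero 2 hsC) hden]
  linear_combination ((a : ℂ) ^ 2 - 1) * ζ * hs2c + ((a : ℂ) ^ 2 - 1) * (ζ - (a : ℂ)) * hc

theorem stmt18 (a : ℝ) (ha0 : 0 < a) (ha1 : a < 1) :
    -- Φ(ζ) = (a+ζ)/|a+ζ| is a homeomorphism of the unit circle onto itself: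
    ContinuousOn (fun ζ : ℂ => ((a : ℂ) + ζ) / (‖(a : ℂ) + ζ‖ : ℂ))
      (sphere (0 : ℂ) 1) ∧
    Set.MapsTo (fun ζ : ℂ => ((a : ℂ) + ζ) / (‖(a : ℂ) + ζ‖ : ℂ))
      (sphere (0 : ℂ) 1) (sphere (0 : ℂ) 1) ∧
    ∃ Ψ : ℂ → ℂ,
      -- Ψ is the (continuous) inverse of Φ on the unit circle:
      ContinuousOn Ψ (sphere (0 : ℂ) 1) ∧
      Set.MapsTo Ψ (sphere (0 : ℂ) 1) (sphere (0 : ℂ) 1) ∧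
      (∀ ζ ∈ sphere (0 : ℂ) 1,
        Ψ (((a : ℂ) + ζ) / (‖(a : ℂ) + ζ‖ : ℂ)) = ζ) ∧
      (∀ ζ ∈ sphere (0 : ℂ) 1,
        ((a : ℂ) + Ψ ζ) / (‖(a : ℂ) + Ψ ζ‖ : ℂ) = ζ) ∧
      -- f(z) = Φ⁻¹(z/|z|) is continuous on ℂ \ {0}:
      ContinuousOn (fun z : ℂ => Ψ (z / (‖z‖ : ℂ))) {(0 : ℂ)}ᶜ ∧
      -- f is constant on each ray emanating from the origin:
      (∀ z : ℂ, z ≠ 0 → ∀ t : ℝ, 0 < t →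
        Ψ (((t : ℂ) * z) / (‖(t : ℂ) * z‖ : ℂ))
          = Ψ (z / (‖z‖ : ℂ))) ∧
      -- f extends holomorphically from bΔ(a,1) and bΔ(−a,1):
      ExtHol (fun z : ℂ => Ψ (z / (‖z‖ : ℂ))) (a : ℂ) 1 ∧
      ExtHol (fun z : ℂ => Ψ (z / (‖z‖ : ℂ))) (-(a : ℂ)) 1 := by
  have hPhi_ne : ∀ ζ : ℂ, ζ ∈ sphere (0 : ℂ) 1 → (a : ℂ) + ζ ≠ 0 := by
    intro ζ hζ h
    rw [mem_sphere_zero_iff_norm] at hζ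
    have : ζ = -(a : ℂ) := by linear_combination h
    rw [this] at hζ
    simp [Complex.norm_real, abs_of_pos ha0] at hζ
    linarith
  refine ⟨?_, ?_, stmt18Psi a, ?_, ?_, ?_, ?_, ?_, ?_, ?_, ?_⟩
  · -- continuity of Φ
    apply ContinuousOn.div
    · fun_prop
    · exact (Complex.continuous_ofReal.comp (continuous_norm.comp
        (continuous_const.add continuous_id))).continuousOn
    · intro ζ hζ
      simpa using (norm_pos_iff.mpr (hPhi_ne ζ hζ)).ne'
  · -- MapsTo Φ
    intro ζ hζ
    rw [mem_sphere_zero_iff_norm] at hζ ⊢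
    have hne := hPhi_ne ζ (by rwa [mem_sphere_zero_iff_norm])
    have hpos := norm_pos_iff.mpr hne
    rw [norm_div, Complex.norm_real, Real.norm_eq_abs, abs_of_pos hpos, div_self hpos.ne']
  · -- continuity of Ψ
    apply Continuous.continuousOn
    unfold stmt18Psi stmt18R
    apply Continuous.sub _ continuous_const
    apply Continuous.mul _ continuous_id
    apply Complex.continuous_ofReal.comp
    exact ((continuous_const.mul Complex.continuous_re).add
      (((continuous_const.mul (Complex.continuous_re.pow 2)).add continuous_const).sub
        continuous_const).sqrt)
  · -- MapsTo Ψ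
    intro w hw
    rw [mem_sphere_zero_iff_norm] at hw ⊢
    exact stmt18Psi_sphere a ha0 ha1 w hw
  · -- Ψ ∘ Φ = id
    intro ζ hζ
    rw [mem_sphere_zero_iff_norm] at hζ
    exact stmt18_key1 a ha0 ha1 ζ hζ
  · -- Φ ∘ Ψ = id
    intro w hw
    rw [mem_sphere_zero_iff_norm] at hw
    have hR := stmt18R_pos a ha0 ha1 w
    have h1 : (a : ℂ) + stmt18Psi a w = ((stmt18R a w : ℝ) : ℂ) * w := by
      rw [stmt18Psi]; ring
    rw [h1, norm_mul, Complex.norm_real, Real.norm_eq_abs, abs_of_pos hR, hw, mul_one]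
    rw [mul_comm, mul_div_assoc, div_self (by simpa using hR.ne'), mul_one]
  · -- continuity of f
    have hΨ : Continuous (stmt18Psi a) := by
      unfold stmt18Psi stmt18R
      apply Continuous.sub _ continuous_const
      apply Continuous.mul _ continuous_id
      apply Complex.continuous_ofReal.comp
      exact ((continuous_const.mul Complex.continuous_re).add
        (((continuous_const.mul (Complex.continuous_re.pow 2)).add continuous_const).sub
          continuous_const).sqrt)
    have hinner : ContinuousOn (fun z : ℂ => z / ((‖z‖ : ℝ) : ℂ)) {(0:ℂ)}ᶜ := by
      apply ContinuousOn.div continuousOn_id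
        ((Complex.continuous_ofReal.comp continuous_norm).continuousOn)
      intro z hz
      simp only [Set.mem_compl_iff, Set.mem_singleton_iff] at hz
      simpa using (norm_pos_iff.mpr hz).ne'
    exact hΨ.comp_continuousOn hinner
  · -- ray invariance
    intro z hz t ht
    congr 1
    rw [norm_mul, Complex.norm_real, Real.norm_eq_abs, abs_of_pos ht, Complex.ofReal_mul]
    have h1 : ((t : ℝ) : ℂ) ≠ 0 := by simpa using ht.ne'
    rw [mul_div_mul_left _ _ h1]
  · -- ExtHol at a
    refine ⟨fun z => z - (a : ℂ), (by fun_prop), (by fun_prop), ?_⟩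
    intro z hz
    rw [mem_sphere_iff_norm] at hz
    have := stmt18_key1 a ha0 ha1 (z - (a : ℂ)) hz
    rw [show (a : ℂ) + (z - (a : ℂ)) = z by ring] at this
    exact this.symm
  · -- ExtHol at -a
    have hdenom : ∀ z ∈ closedBall (-(a : ℂ)) 1, (1 - (a : ℂ) ^ 2) - (a : ℂ) * z ≠ 0 := by
      intro z hz h
      rw [mem_closedBall_iff_norm] at hz
      have h2 : (a : ℂ) * (z + (a : ℂ)) = 1 := by linear_combination -h
      have h3 : ‖(a : ℂ) * (z + (a : ℂ))‖ = 1 := by rw [h2]; simp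
      rw [norm_mul, Complex.norm_real, Real.norm_eq_abs, abs_of_pos ha0] at h3
      have h4 : ‖z + (a : ℂ)‖ ≤ 1 := by
        rw [show z + (a : ℂ) = z - (-(a : ℂ)) by ring]; exact hz
      nlinarith [norm_nonneg (z + (a : ℂ))]
    refine ⟨fun z => z / ((1 - (a : ℂ) ^ 2) - (a : ℂ) * z), ?_, ?_, ?_⟩
    · apply ContinuousOn.div (by fun_prop) (by fun_prop) hdenom
    · apply DifferentiableOn.div (differentiable_id.differentiableOn)
        (by fun_prop)
      intro z hz
      exact hdenom z (ball_subset_closedBall hz)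
    · intro z hz
      rw [mem_sphere_iff_norm] at hz
      rw [show z - -(a : ℂ) = z + (a : ℂ) by ring] at hz
      have h7 := stmt18_key2 a ha0 ha1 (z + (a : ℂ)) hz
      rw [show z + (a : ℂ) - (a : ℂ) = z by ring] at h7
      show z / ((1 - (a : ℂ) ^ 2) - (a : ℂ) * z) = stmt18Psi a (z / ((‖z‖ : ℝ) : ℂ))
      rw [h7]
      congr 1
      ring
end

section
/- Let 0 < a < 1 be real, let Φ(ζ) = (a+ζ)/|a+ζ| for |ζ| = 1 (a homeomorphism of the unit circle onto itself), and let f : ℂ \ {0} → ℂ be defined by f(z) = Φ⁻¹(z/|z|). If c ∈ ℂ with |c| < 1 and f extends holomorphically from the circle bΔ(c,1), then c = a or c = −a. -/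
open Complex Metric ComplexConjugate

lemma auxS19_final (a t : ℝ) (ha0 : 0 < a) (ha1 : a < 1) (ht0 : t < 0) (ht1 : -1 < t)
    (hta : a*t^2+2*t+a = 0) (c : ℂ) (hc : ‖c‖ < 1)
    (hD : (c + (-(t:ℂ)^2) * conj c)^2 + 4*(-(t:ℂ)^2)*(1 - conj c * c) = 0) :
    c = (a:ℂ) ∨ c = -(a:ℂ) := by
  have ht2 : t^2 < 1 := by nlinarith
  have hDc : (conj c + (-(t:ℂ)^2) * c)^2 + 4*(-(t:ℂ)^2)*(1 - c * conj c) = 0 := by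
    have := congrArg (starRingEnd ℂ) hD
    simpa [map_add, map_mul, map_pow, map_sub, map_one, map_ofNat, Complex.conj_ofReal] using this
  have h7 : ((1+(t:ℂ)^2)*(c - conj c)) * ((1-(t:ℂ)^2)*(c + conj c)) = 0 := by
    linear_combination hD - hDc
  have h1T : (1:ℂ)+(t:ℂ)^2 ≠ 0 := by
    have : ((1+t^2 : ℝ):ℂ) ≠ 0 := by
      rw [Complex.ofReal_ne_zero]; positivity
    simpa using this
  have h2T : (1:ℂ)-(t:ℂ)^2 ≠ 0 := by
    have : ((1-t^2 : ℝ):ℂ) ≠ 0 := by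
      rw [Complex.ofReal_ne_zero]; nlinarith
    simpa using this
  rcases mul_eq_zero.mp h7 with h | h
  · -- c = conj c : c real
    have hcr : conj c = c := by
      rcases mul_eq_zero.mp h with h' | h'
      · exact absurd h' h1T
      · linear_combination -h'
    obtain ⟨x, hx⟩ := Complex.conj_eq_iff_real.mp hcr
    subst hx
    rw [Complex.conj_ofReal] at hD
    have hre : ((x^2*(1-t^2)^2 - 4*t^2*(1-x^2) : ℝ):ℂ) = 0 := by
      push_cast
      linear_combination hD
    rw [Complex.ofReal_eq_zero] at hre
    have hx2 : (x^2 - a^2)*(1+t^2)^2 = 0 := by linear_combination hre - (a + a*t^2 - 2*t)*hta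
    have hxa : x^2 = a^2 := by
      have h12 : ((1:ℝ)+t^2)^2 ≠ 0 := by positivity
      have := (mul_eq_zero.mp hx2).resolve_right h12
      linarith [this]
    have : (x - a)*(x + a) = 0 := by linear_combination hxa
    rcases mul_eq_zero.mp this with h' | h'
    · left; have : x = a := by linarith
      rw [this]
    · right; have : x = -a := by linarith
      rw [this]; push_cast; ring
  · -- c + conj c = 0 : c imaginary
    exfalso
    have hci : conj c = -c := by
      rcases mul_eq_zero.mp h with h' | h'
      · exact absurd h' h2T
      · linear_combination h'
    have him : c = (c.im : ℂ) * I := by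
      have := Complex.re_add_im c
      have hre0 : c.re = 0 := by
        have h2 := congrArg Complex.re hci
        simp at h2
        linarith
      rw [← this, hre0]; simp
    set y := c.im with hy
    rw [him] at hD
    have hconjyI : conj ((y:ℂ)*I) = -((y:ℂ)*I) := by
      simp [map_mul, Complex.conj_ofReal, Complex.conj_I]
    rw [hconjyI] at hD
    have hIs : (I:ℂ)^2 = -1 := Complex.I_sq
    have hre : ((y^2*(1+t^2)^2 + 4*t^2*(1-y^2) : ℝ):ℂ) = 0 := by
      push_cast
      linear_combination -hD + (y:ℂ)^2*(1-(t:ℂ)^2)^2 * hIs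
    rw [Complex.ofReal_eq_zero] at hre
    have hy1 : y^2 < 1 := by
      have : ‖c‖ = |y| := by rw [him]; simp
      nlinarith [abs_nonneg y, this ▸ hc, _root_.sq_abs y]
    nlinarith [sq_nonneg y, sq_nonneg t, sq_nonneg (t*y)]


lemma auxS19_root (a t : ℝ) (ha0 : 0 < a) (ha1 : a < 1) (ht0 : t < 0) (ht1 : -1 < t)
    (hta : a*t^2+2*t+a = 0) (c : ℂ) (hc : ‖c‖ < 1)
    (g : ℂ → ℂ) (hgd : DifferentiableOn ℂ g (ball c 1))
    (hstar : ∀ w ∈ ball c 1,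
      g w * (g w + a) * (conj c * w + (1 - conj c * c)) = w*(w-c)*(1+a*g w))
    (z : ℂ) (hroot : z*(z-c) = (-(t:ℂ)^2) * (conj c * z + (1 - conj c * c))) :
    z = (c + (-(t:ℂ)^2) * conj c)/2 := by
  have ht2 : t^2 < 1 := by nlinarith
  have htne : t ≠ 0 := ne_of_lt ht0
  have hT : (a:ℂ)*(t:ℂ)^2 + 2*(t:ℂ) + (a:ℂ) = 0 := by exact_mod_cast hta
  have hnc : Complex.normSq c < 1 := by
    rw [Complex.normSq_eq_norm_sq]; nlinarith [norm_nonneg c]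
  have hnc1 : (1:ℂ) - conj c * c ≠ 0 := by
    have he : (1:ℂ) - conj c * c = ((1 - Complex.normSq c : ℝ):ℂ) := by
      push_cast
      rw [← Complex.mul_conj]; ring
    rw [he, Complex.ofReal_ne_zero]
    nlinarith
  -- z is in the ball
  have hEq : (z-c)*z = (-(t:ℂ)^2)*(1 + conj c*(z-c)) := by linear_combination hroot
  have hzball : z ∈ ball c 1 := by
    by_contra hnb
    have h1z : 1 ≤ ‖z - c‖ := by
      rw [mem_ball_iff_norm] at hnb
      simpa using not_lt.mp hnb
    -- the identity |z|² - |1 + c̄(z-c)|² = (|z-c|²-1)(1-|c|²)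
    have hidC : (z*(conj z) : ℂ) - (1 + conj c*(z-c))*conj (1 + conj c*(z-c))
        = ((z-c)*conj (z-c) - 1)*(1 - c*conj c) := by
      simp only [map_add, map_mul, map_sub, map_one, Complex.conj_conj]
      ring
    rw [Complex.mul_conj, Complex.mul_conj, Complex.mul_conj, Complex.mul_conj] at hidC
    have hidR : Complex.normSq z - Complex.normSq (1 + conj c*(z-c))
        = (Complex.normSq (z-c) - 1)*(1 - Complex.normSq c) := by exact_mod_cast hidC
    rw [Complex.normSq_eq_norm_sq, Complex.normSq_eq_norm_sq, Complex.normSq_eq_norm_sq,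
      Complex.normSq_eq_norm_sq] at hidR
    have habs : ‖z-c‖ * ‖z‖ = t^2 * ‖1 + conj c*(z-c)‖ := by
      have h := congrArg (fun x : ℂ => ‖x‖) hEq
      simp only [norm_mul] at h
      rw [h, norm_neg, norm_pow, Complex.norm_real, Real.norm_eq_abs, _root_.sq_abs]
    have hge : 0 ≤ (‖z-c‖^2 - 1)*(1 - ‖c‖^2) := by
      have g1 : (0:ℝ) ≤ ‖z-c‖^2 - 1 := by nlinarith
      have g2 : (0:ℝ) ≤ 1 - ‖c‖^2 := by nlinarith [norm_nonneg c]
      exact mul_nonneg g1 g2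
    have hle : ‖1 + conj c*(z-c)‖ ≤ ‖z‖ := by
      nlinarith [norm_nonneg z, norm_nonneg (1 + conj c*(z-c))]
    have hzpos : 0 < ‖z‖ := by
      rcases eq_or_lt_of_le (norm_nonneg z) with h0 | h0
      · exfalso
        have hz0 : z = 0 := norm_eq_zero.mp h0.symm
        rw [hz0] at hEq
        have h8 : (-(t:ℂ)^2) * ((1:ℂ) - conj c*c) = 0 := by linear_combination -hEq
        have ht2c : (-(t:ℂ)^2) ≠ 0 := by
          simp only [ne_eq, neg_eq_zero, pow_eq_zero_iff, OfNat.ofNat_ne_zero,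
            not_false_eq_true, Complex.ofReal_eq_zero]
          exact htne
        exact hnc1 ((mul_eq_zero.mp h8).resolve_left ht2c)
      · exact h0
    nlinarith [norm_nonneg (z-c)]
  -- A z ≠ 0
  have hAz : conj c * z + (1 - conj c * c) ≠ 0 := by
    intro h
    rw [h, mul_zero] at hroot
    rcases mul_eq_zero.mp hroot with h0 | h0
    · rw [h0] at h; simp at h; exact hnc1 (by linear_combination h)
    · have hzc : z = c := by linear_combination h0
      rw [hzc] at h
      have : (1:ℂ) = 0 := by linear_combination h
      simp at this
  -- g z = t
  have hq : (conj c*z + (1 - conj c*c)) * (g z^2 + a*(1+(t:ℂ)^2)*g z + (t:ℂ)^2) = 0 := by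
    linear_combination (hstar z hzball) + (1+(a:ℂ)*g z) * hroot
  have hgz : g z = (t:ℂ) := by
    have h2 := (mul_eq_zero.mp hq).resolve_left hAz
    have h3 : (g z - (t:ℂ))^2 = 0 := by linear_combination h2 - g z * hT
    have := pow_eq_zero_iff (n := 2) (by norm_num) |>.mp h3
    linear_combination this
  -- derivative computation
  have hdiff : DifferentiableAt ℂ g z := (hgd z hzball).differentiableAt (isOpen_ball.mem_nhds hzball)
  have hgat : HasDerivAt g (deriv g z) z := hdiff.hasDerivAt
  set G := deriv g z with hG
  have h2 : HasDerivAt (fun w => conj c * w + (1 - conj c * c)) (conj c) z := by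
    simpa using ((hasDerivAt_id z).const_mul (conj c)).add_const (1 - conj c * c)
  have h1 : HasDerivAt (fun w => g w * (g w + (a:ℂ))) (G*(g z + a) + g z * G) z :=
    hgat.mul (hgat.add_const _)
  have h3 : HasDerivAt (fun w => g w * (g w + (a:ℂ)) * (conj c * w + (1 - conj c * c)))
      ((G*(g z + a) + g z * G) * (conj c*z + (1 - conj c*c)) + g z * (g z + a) * conj c) z :=
    h1.mul h2
  have h4 : HasDerivAt (fun w => w * (w - c)) (1*(z-c) + z*1) z :=
    (hasDerivAt_id z).mul ((hasDerivAt_id z).sub_const c)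
  have h5 : HasDerivAt (fun w => 1 + (a:ℂ) * g w) ((a:ℂ) * G) z :=
    (hgat.const_mul (a:ℂ)).const_add 1
  have h6 : HasDerivAt (fun w => w * (w - c) * (1 + (a:ℂ) * g w))
      ((1*(z-c) + z*1) * (1 + a * g z) + z*(z-c) * ((a:ℂ)*G)) z := h4.mul h5
  have hH' : HasDerivAt
      (fun w => g w * (g w + (a:ℂ)) * (conj c * w + (1 - conj c * c)) - w * (w - c) * (1 + (a:ℂ) * g w))
      (((G*(g z + a) + g z * G) * (conj c*z + (1 - conj c*c)) + g z * (g z + a) * conj c)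
        - ((1*(z-c) + z*1) * (1 + a * g z) + z*(z-c) * ((a:ℂ)*G))) z := h3.sub h6
  have hH0 : HasDerivAt
      (fun w => g w * (g w + (a:ℂ)) * (conj c * w + (1 - conj c * c)) - w * (w - c) * (1 + (a:ℂ) * g w))
      0 z := by
    have hev : (fun w => g w * (g w + (a:ℂ)) * (conj c * w + (1 - conj c * c)) - w * (w - c) * (1 + (a:ℂ) * g w))
        =ᶠ[nhds z] (fun _ => (0:ℂ)) := by
      filter_upwards [isOpen_ball.mem_nhds hzball] with w hw
      rw [sub_eq_zero]
      exact hstar w hw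
    exact (hasDerivAt_const z (0:ℂ)).congr_of_eventuallyEq hev
  have hE : (((G*(g z + a) + g z * G) * (conj c*z + (1 - conj c*c)) + g z * (g z + a) * conj c)
        - ((1*(z-c) + z*1) * (1 + a * g z) + z*(z-c) * ((a:ℂ)*G))) = 0 := hH'.unique hH0
  rw [hgz] at hE
  have h1aT : (1:ℂ) + (a:ℂ)*(t:ℂ) ≠ 0 := by
    have : (1:ℂ) + (a:ℂ)*(t:ℂ) = ((1+a*t : ℝ):ℂ) := by push_cast; ring
    rw [this, Complex.ofReal_ne_zero]
    nlinarith
  have hfin : ((1:ℂ)+(a:ℂ)*(t:ℂ))*(z - (c + (-(t:ℂ)^2)*conj c)/2) = 0 := by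
    linear_combination (-1/2)*hE - ((a:ℂ)*G/2)*hroot
      + (G*(conj c*z+(1-conj c*c))/2 + (t:ℂ)*conj c/2)*hT
  have := (mul_eq_zero.mp hfin).resolve_left h1aT
  linear_combination this



theorem stmt19 (a : ℝ) (ha0 : 0 < a) (ha1 : a < 1)
    -- Ψ is the inverse of the homeomorphism Φ(ζ) = (a+ζ)/|a+ζ| of the unit circle:
    (Ψ : ℂ → ℂ)
    (hΨc : ContinuousOn Ψ (sphere (0 : ℂ) 1))
    (hΨm : Set.MapsTo Ψ (sphere (0 : ℂ) 1) (sphere (0 : ℂ) 1))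
    (hΨ1 : ∀ ζ ∈ sphere (0 : ℂ) 1,
      Ψ (((a : ℂ) + ζ) / (‖(a : ℂ) + ζ‖ : ℂ)) = ζ)
    (hΨ2 : ∀ ζ ∈ sphere (0 : ℂ) 1,
      ((a : ℂ) + Ψ ζ) / (‖(a : ℂ) + Ψ ζ‖ : ℂ) = ζ)
    -- f(z) = Φ⁻¹(z/|z|) extends holomorphically from bΔ(c,1) with |c| < 1:
    (c : ℂ) (hc : ‖c‖ < 1)
    (hext : ExtHol (fun z : ℂ => Ψ (z / (‖z‖ : ℂ))) c 1) :
    c = (a : ℂ) ∨ c = -(a : ℂ) := by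
  obtain ⟨g, hgc, hgd, hgb⟩ := hext
  -- the real parameter t (critical point of the Blaschke product)
  have ha2 : (0:ℝ) < 1 - a^2 := by nlinarith
  set s0 : ℝ := Real.sqrt (1 - a^2) with hs0def
  have hs2 : s0^2 = 1 - a^2 := Real.sq_sqrt ha2.le
  have hs0 : 0 ≤ s0 := Real.sqrt_nonneg _
  set t : ℝ := (s0 - 1)/a with htdef
  have hta : a*t^2 + 2*t + a = 0 := by
    rw [htdef]; field_simp
    first
    | linear_combination (a^2)*hs2
    | linear_combination hs2
    | linear_combination (a^2-1)*hs2
    | linear_combination (1-a^2)*hs2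
    | linear_combination -hs2
  have ht0 : t < 0 := by
    apply div_neg_of_neg_of_pos _ ha0
    nlinarith
  have ht1 : -1 < t := by
    rw [htdef, lt_div_iff₀ ha0]
    nlinarith [sq_nonneg (s0 + 1 - a)]
  -- boundary identity
  have hkey : ∀ z ∈ sphere c 1,
      g z * (g z + (a:ℂ)) * (conj c * z + (1 - conj c * c)) = z*(z-c)*(1+(a:ℂ)*g z) := by
    intro z hz
    have hz1 : ‖z - c‖ = 1 := by
      have := mem_sphere_iff_norm.mp hz
      simpa using this
    have hz0 : z ≠ 0 := by
      intro h
      rw [h, zero_sub, norm_neg] at hz1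
      linarith
    have hzc : (z - c) * (conj z - conj c) = 1 := by
      have h := Complex.mul_conj (z - c)
      rw [Complex.normSq_eq_norm_sq, hz1, map_sub] at h
      simpa using h
    have hzabs : ‖z‖ ≠ 0 := norm_ne_zero_iff.mpr hz0
    set ω := z / (‖z‖ : ℂ) with hω
    have hωm : ω ∈ sphere (0:ℂ) 1 := by
      rw [mem_sphere_zero_iff_norm, hω, norm_div, Complex.norm_real, Real.norm_eq_abs,
        _root_.abs_of_nonneg (norm_nonneg z), div_self hzabs]
    set u := Ψ ω with hu
    have hum : ‖u‖ = 1 := by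
      have := hΨm hωm
      rwa [mem_sphere_zero_iff_norm] at this
    have huc : u * conj u = 1 := by
      rw [Complex.mul_conj, Complex.normSq_eq_norm_sq, hum]; norm_num
    have hau : (a:ℂ) + u ≠ 0 := by
      intro h
      have hu' : u = -(a:ℂ) := by linear_combination h
      rw [hu', norm_neg, Complex.norm_real, Real.norm_eq_abs, abs_of_pos ha0] at hum
      linarith
    have hr : (0:ℝ) < ‖(a:ℂ) + u‖ := norm_pos_iff.mpr hau
    have hr0 : ((‖(a:ℂ)+u‖ : ℝ):ℂ) ≠ 0 := Complex.ofReal_ne_zero.mpr hr.ne'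
    have hΨ2' := hΨ2 ω hωm
    rw [← hu, div_eq_iff hr0] at hΨ2'
    have hr2 : ((‖(a:ℂ)+u‖ : ℝ):ℂ)^2 = ((a:ℂ)+u) * ((a:ℂ) + conj u) := by
      have h := Complex.mul_conj ((a:ℂ)+u)
      rw [Complex.normSq_eq_norm_sq, map_add, Complex.conj_ofReal] at h
      push_cast at h
      exact h.symm
    have hz2 : ((‖z‖ : ℝ):ℂ)^2 = z * conj z := by
      have h := Complex.mul_conj z
      rw [Complex.normSq_eq_norm_sq] at h
      push_cast at h
      exact h.symm
    have hzC : ((‖z‖:ℝ):ℂ) ≠ 0 := Complex.ofReal_ne_zero.mpr hzabs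
    have e0' : ((a:ℂ)+u) * ((‖z‖:ℝ):ℂ) = z * ((‖(a:ℂ)+u‖:ℝ):ℂ) := by
      nth_rw 1 [hΨ2']
      rw [hω]
      field_simp
    have e2 : ((a:ℂ)+u)^2 * (z*conj z) = z^2*(((a:ℂ)+u)*((a:ℂ)+conj u)) := by
      rw [← hz2, ← hr2]
      linear_combination (((a:ℂ)+u) * ((‖z‖:ℝ):ℂ)
        + z * ((‖(a:ℂ)+u‖:ℝ):ℂ)) * e0'
    have e1 : ((a:ℂ)+u)*conj z = z*((a:ℂ)+conj u) := by
      have h9 : (z*((a:ℂ)+u)) * (((a:ℂ)+u)*conj z) = (z*((a:ℂ)+u)) * (z*((a:ℂ)+conj u)) := by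
        linear_combination e2
      exact mul_left_cancel₀ (mul_ne_zero hz0 hau) h9
    have hgu : g z = u := by
      rw [hu, hω]; exact hgb z hz
    rw [hgu]
    linear_combination (-(u*(u+(a:ℂ))))*hzc + (u*(z-c))*e1 + (z*(z-c))*huc
  -- extend the identity inside the ball by the maximum principle
  have hstar : ∀ w ∈ ball c 1,
      g w * (g w + (a:ℂ)) * (conj c * w + (1 - conj c * c)) = w*(w-c)*(1+(a:ℂ)*g w) := by
    have hd1 : DiffContOnCl ℂ (fun w => g w * (g w + (a:ℂ)) * (conj c * w + (1 - conj c * c)))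
        (ball c 1) := by
      refine ⟨(hgd.mul (hgd.add (differentiableOn_const _))).mul
        (((differentiableOn_const (conj c)).mul differentiableOn_id).add
          (differentiableOn_const _)), ?_⟩
      rw [closure_ball c one_ne_zero]
      exact (hgc.mul (hgc.add continuousOn_const)).mul
        ((continuousOn_const.mul continuousOn_id).add continuousOn_const)
    have hd2 : DiffContOnCl ℂ (fun w => w*(w-c)*(1+(a:ℂ)*g w)) (ball c 1) := by
      refine ⟨(differentiableOn_id.mul (differentiableOn_id.sub
        (differentiableOn_const _))).mul
        ((differentiableOn_const _).add ((differentiableOn_const _).mul hgd)), ?_⟩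
      rw [closure_ball c one_ne_zero]
      exact (continuousOn_id.mul (continuousOn_id.sub continuousOn_const)).mul
        (continuousOn_const.add (continuousOn_const.mul hgc))
    have heq := Complex.eqOn_closure_of_eqOn_frontier isBounded_ball hd1 hd2 ?_
    · exact fun w hw => heq (subset_closure hw)
    · rw [frontier_ball c one_ne_zero]
      exact fun z hz => hkey z hz
  -- the discriminant must vanish
  obtain ⟨sD, hsD⟩ := IsAlgClosed.exists_pow_nat_eq
    ((c + (-(t:ℂ)^2)*conj c)^2 + 4*(-(t:ℂ)^2)*(1 - conj c*c)) (n := 2) (by norm_num)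
  have hrootP : ((c + (-(t:ℂ)^2)*conj c + sD)/2) * (((c + (-(t:ℂ)^2)*conj c + sD)/2) - c)
      = (-(t:ℂ)^2) * (conj c * ((c + (-(t:ℂ)^2)*conj c + sD)/2) + (1 - conj c * c)) := by
    linear_combination (1/4)*hsD
  have hrootM : ((c + (-(t:ℂ)^2)*conj c - sD)/2) * (((c + (-(t:ℂ)^2)*conj c - sD)/2) - c)
      = (-(t:ℂ)^2) * (conj c * ((c + (-(t:ℂ)^2)*conj c - sD)/2) + (1 - conj c * c)) := by
    linear_combination (1/4)*hsD
  have hP := auxS19_root a t ha0 ha1 ht0 ht1 hta c hc g hgd hstar _ hrootP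
  have hM := auxS19_root a t ha0 ha1 ht0 ht1 hta c hc g hgd hstar _ hrootM
  have hsD0 : sD = 0 := by linear_combination hP - hM
  have hD : (c + (-(t:ℂ)^2) * conj c)^2 + 4*(-(t:ℂ)^2)*(1 - conj c * c) = 0 := by
    rw [← hsD, hsD0]; norm_num
  exact auxS19_final a t ha0 ha1 ht0 ht1 hta c hc hD
end
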